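/- arXiv:1303.0919 — 3 statements merged into one kernel-verified Lean document; each statement's English description precedes it below -/
import Mathlib

section
/- Suppose the labeled space (E,L,𝔅̄) satisfies: for every finite subset {A_1,…,A_N} of 𝔅̄ and every K ≥ 1 there exists m_0 ≥ 1 such that A_{i_1}E^{≤K}A_{i_2}⋯E^{≤K}A_{i_n} = ∅ for all n > m_0 and all choices i_j ∈ {1,…,N}. Then for every representation {s_a, p_A} of (E,L,𝔅̄) in a C*-algebra, the C*-subalgebra generated by {s_a : a ∈ 𝒜} ∪ {p_A : A ∈ 𝔅̄} is an AF algebra, i.e. for every finite subset F of it and every ε > 0 there is a finite-dimensional C*-subalgebra D with every element of F within distance ε of D. -/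
/-! # Common framework for labeled graph C*-algebras

Directed graphs, finite paths, labeled spaces `(E, L, 𝔅̄)` where `𝔅̄` is the
smallest accommodating set closed under relative complements (and containing
the sink parts of its members), loops and generalized loops, representations
of labeled spaces in C*-algebras, gauge actions, infinite projections,
AF algebras, and closed two-sided ideals. -/

noncomputable section

/-- A directed graph with vertex set `V` and edge set `E`. -/
structure DirGraph (V : Type*) (E : Type*) where
  src : E → V
  rng : E → V

variable {V E 𝒜 : Type*}

/-- A (finite) path of positive length in a directed graph: a nonempty list of
composable edges. -/
structure GPath (G : DirGraph V E) where
  edges : List E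
  ne : edges ≠ []
  chain : edges.Chain' fun e f => G.rng e = G.src f

namespace GPath

variable {G : DirGraph V E}

/-- The source vertex of a path. -/
def source (p : GPath G) : V := G.src (p.edges.head p.ne)

/-- The range vertex of a path. -/
def range (p : GPath G) : V := G.rng (p.edges.getLast p.ne)

/-- The length of a path. -/
def length (p : GPath G) : ℕ := p.edges.length

/-- The label word of a path under a labeling `L`. -/
def label (L : E → 𝒜) (p : GPath G) : List 𝒜 := p.edges.map L

end GPath

/-- The set of sinks of a graph (vertices emitting no edge). -/
def DirGraph.sinks (G : DirGraph V E) : Set V := {v | ∀ e, G.src e ≠ v}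

/-- `w ∈ L*(E)`: `w` is the label of some path of positive length. -/
def IsLabelWord (G : DirGraph V E) (L : E → 𝒜) (w : List 𝒜) : Prop :=
  ∃ p : GPath G, p.label L = w

/-- The range `r(w)` of a labeled path `w`. -/
def rngW (G : DirGraph V E) (L : E → 𝒜) (w : List 𝒜) : Set V :=
  {v | ∃ p : GPath G, p.label L = w ∧ p.range = v}

/-- The relative range `r(A, w)` of a labeled path `w` with respect to `A`. -/
def relRng (G : DirGraph V E) (L : E → 𝒜) (A : Set V) (w : List 𝒜) : Set V :=
  {v | ∃ p : GPath G, p.label L = w ∧ p.source ∈ A ∧ p.range = v}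

/-- `L(A E^n)`: labels of paths of length exactly `n` with source in `A`. -/
def labelsFromLen (G : DirGraph V E) (L : E → 𝒜) (A : Set V) (n : ℕ) : Set (List 𝒜) :=
  {w | ∃ p : GPath G, p.source ∈ A ∧ p.length = n ∧ p.label L = w}

/-- `L(A E^{≤n})`: labels of paths of length between `1` and `n` with source in `A`. -/
def labelsFromLe (G : DirGraph V E) (L : E → 𝒜) (A : Set V) (n : ℕ) : Set (List 𝒜) :=
  {w | ∃ p : GPath G, p.source ∈ A ∧ p.length ≤ n ∧ p.label L = w}

/-- `L(A E^{≥n})`: labels of paths of length at least `n` (and at least `1`)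
with source in `A`. -/
def labelsFromGe (G : DirGraph V E) (L : E → 𝒜) (A : Set V) (n : ℕ) : Set (List 𝒜) :=
  {w | ∃ p : GPath G, p.source ∈ A ∧ n ≤ p.length ∧ p.label L = w}

/-- `L(E^n A)`: labels of paths of length exactly `n` with range in `A`. -/
def labelsToLen (G : DirGraph V E) (L : E → 𝒜) (n : ℕ) (A : Set V) : Set (List 𝒜) :=
  {w | ∃ p : GPath G, p.range ∈ A ∧ p.length = n ∧ p.label L = w}

/-- `L(E^{≤l} v)`: labels of paths of length between `1` and `l` with range `v`. -/
def labelsToLe (G : DirGraph V E) (L : E → 𝒜) (l : ℕ) (v : V) : Set (List 𝒜) :=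
  {w | ∃ p : GPath G, p.range = v ∧ p.length ≤ l ∧ p.label L = w}

/-- `𝔅̄`: the smallest accommodating set for `(E, L)` (containing the ranges
`r(α)` for `α ∈ L*(E)` and closed under relative ranges, finite intersections
and finite unions) that is moreover closed under relative complements and
contains `A_sk = A ∩ sinks` for every `A` belonging to it. -/
inductive Bbar (G : DirGraph V E) (L : E → 𝒜) : Set V → Prop
  | base (w : List 𝒜) (hw : IsLabelWord G L w) : Bbar G L (rngW G L w)
  | rel (A : Set V) (w : List 𝒜) (hA : Bbar G L A) (hw : IsLabelWord G L w) :
      Bbar G L (relRng G L A w)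
  | inter (A B : Set V) (hA : Bbar G L A) (hB : Bbar G L B) : Bbar G L (A ∩ B)
  | union (A B : Set V) (hA : Bbar G L A) (hB : Bbar G L B) : Bbar G L (A ∪ B)
  | diff (A B : Set V) (hA : Bbar G L A) (hB : Bbar G L B) : Bbar G L (A \ B)
  | sk (A : Set V) (hA : Bbar G L A) : Bbar G L (A ∩ G.sinks)

/-- The standing assumptions on a labeled space `(E, L, 𝔅̄)`: weakly
left-resolving, set-finite, receiver set-finite, and no sink is a source. -/
structure StandingAssumptions (G : DirGraph V E) (L : E → 𝒜) : Prop where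
  wlr : ∀ A B : Set V, Bbar G L A → Bbar G L B → ∀ w : List 𝒜, IsLabelWord G L w →
    relRng G L A w ∩ relRng G L B w = relRng G L (A ∩ B) w
  setFinite : ∀ A : Set V, Bbar G L A → ∀ n : ℕ, 1 ≤ n → (labelsFromLen G L A n).Finite
  receiverSetFinite : ∀ A : Set V, Bbar G L A → ∀ n : ℕ, 1 ≤ n → (labelsToLen G L n A).Finite
  sinkNotSource : ∀ v ∈ G.sinks, ∃ e, G.rng e = v

/-- The `n`-fold concatenation `w^n` of a word `w`. -/
def wordPow (w : List 𝒜) (n : ℕ) : List 𝒜 := (List.replicate n w).flatten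

/-- A labeled path is repeatable if all its powers `w^n`, `n ≥ 1`, are again
labeled paths. -/
def Repeatable (G : DirGraph V E) (L : E → 𝒜) (w : List 𝒜) : Prop :=
  ∀ n : ℕ, 1 ≤ n → IsLabelWord G L (wordPow w n)

/-- The generalized vertex `[v]_l`: all non-source vertices receiving exactly
the same labeled paths of length at most `l` as `v` does. -/
def gvtx (G : DirGraph V E) (L : E → 𝒜) (l : ℕ) (v : V) : Set V :=
  {u | (∃ e, G.rng e = u) ∧ labelsToLe G L l u = labelsToLe G L l v}

/-- A generalized loop at `A`: a labeled path `α ∈ L(A E^{≥1} A)`. -/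
def IsGenLoop (G : DirGraph V E) (L : E → 𝒜) (A : Set V) (α : List 𝒜) : Prop :=
  ∃ p : GPath G, p.label L = α ∧ p.source ∈ A ∧ p.range ∈ A

/-- A loop at `A`: a generalized loop `α` at `A` such that `A ⊆ r(A, α)`. -/
def IsLoop (G : DirGraph V E) (L : E → 𝒜) (A : Set V) (α : List 𝒜) : Prop :=
  IsGenLoop G L A α ∧ A ⊆ relRng G L A α

/-- The nonempty initial segments (initial paths) of a word `α`. -/
def initialSegs (α : List 𝒜) : Set (List 𝒜) := {w | w ≠ [] ∧ w <+: α}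

/-- A loop `α` at `A` has an exit if (i) the initial segments of `α` form a
proper subset of `L(A E^{≤|α|})`, or (ii) `r(A, α_{[1,i]})` contains a sink for
some `1 ≤ i ≤ |α|`, or (iii) `A` is a proper subset of `r(A, α)`. -/
def HasExitLoop (G : DirGraph V E) (L : E → 𝒜) (A : Set V) (α : List 𝒜) : Prop :=
  initialSegs α ⊂ labelsFromLe G L A α.length ∨
  (∃ k : ℕ, 1 ≤ k ∧ k ≤ α.length ∧ (relRng G L A (α.take k) ∩ G.sinks).Nonempty) ∨
  A ⊂ relRng G L A α

/-- `A_0 E^{≤K} A_1 ⋯ E^{≤K} A_m ≠ ∅`: existence of `m` consecutively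
composable paths, each of length between `1` and `K`, the `j`-th going from
`As j` to `As (j+1)`. -/
def ChainExists (G : DirGraph V E) (As : ℕ → Set V) (K m : ℕ) : Prop :=
  ∃ xs : Fin m → GPath G,
    (∀ j : Fin m, (xs j).length ≤ K ∧ (xs j).source ∈ As j.val ∧
      (xs j).range ∈ As (j.val + 1)) ∧
    ∀ (j : ℕ) (h : j + 1 < m),
      (xs ⟨j, Nat.lt_of_succ_lt h⟩).range = (xs ⟨j + 1, h⟩).source

/-- Same as `ChainExists` but with all paths of length exactly `K`
(i.e. `A_0 E^K A_1 ⋯ E^K A_m ≠ ∅`). -/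
def ChainExistsExact (G : DirGraph V E) (As : ℕ → Set V) (K m : ℕ) : Prop :=
  ∃ xs : Fin m → GPath G,
    (∀ j : Fin m, (xs j).length = K ∧ (xs j).source ∈ As j.val ∧
      (xs j).range ∈ As (j.val + 1)) ∧
    ∀ (j : ℕ) (h : j + 1 < m),
      (xs ⟨j, Nat.lt_of_succ_lt h⟩).range = (xs ⟨j + 1, h⟩).source

/-- Condition (a): for every finite family `A_1, …, A_N` in `𝔅̄` and every
`K ≥ 1` there is `m₀ ≥ 1` such that
`A_{i_1} E^{≤K} A_{i_2} ⋯ E^{≤K} A_{i_n} = ∅` (`n` sets, `n - 1` path factors)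
for all `n > m₀` and all choices of indices. -/
def CondA (G : DirGraph V E) (L : E → 𝒜) : Prop :=
  ∀ (N : ℕ) (As : Fin N → Set V), (∀ i, Bbar G L (As i)) → ∀ K : ℕ, 1 ≤ K →
    ∃ m0 : ℕ, 1 ≤ m0 ∧ ∀ n : ℕ, m0 < n → ∀ ι : ℕ → Fin N,
      ¬ ChainExists G (fun j => As (ι j)) K (n - 1)

/-- A word is agreeable (for level `l`) if it is of the form `β^k β'` with
`β, β' ∈ L(E^{≤l})` and `β'` a nonempty initial segment of `β`. -/
def AgreeableW (G : DirGraph V E) (L : E → 𝒜) (l : ℕ) (α : List 𝒜) : Prop :=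
  ∃ (k : ℕ) (β β' : List 𝒜), IsLabelWord G L β ∧ IsLabelWord G L β' ∧
    β.length ≤ l ∧ β' ≠ [] ∧ β' <+: β ∧ α = wordPow β k ++ β'

/-- A representation of the labeled space `(E, L, 𝔅̄)` in a (C*-)algebra `B`:
projections `p A`, `A ∈ 𝔅̄`, and partial isometries `s a`, `a ∈ 𝒜`, satisfying
the defining relations of a labeled graph C*-algebra. -/
structure LRep (G : DirGraph V E) (L : E → 𝒜) (B : Type*)
    [NonUnitalRing B] [StarRing B] where
  p : Set V → B
  s : 𝒜 → B
  p_empty : p ∅ = 0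
  p_sa : ∀ A : Set V, Bbar G L A → star (p A) = p A
  p_mul : ∀ A A' : Set V, Bbar G L A → Bbar G L A' → p A * p A' = p (A ∩ A')
  p_union : ∀ A A' : Set V, Bbar G L A → Bbar G L A' →
    p (A ∪ A') = p A + p A' - p (A ∩ A')
  s_pi : ∀ a : 𝒜, s a * star (s a) * s a = s a
  p_s : ∀ (A : Set V) (a : 𝒜), Bbar G L A → p A * s a = s a * p (relRng G L A [a])
  s_s : ∀ a : 𝒜, star (s a) * s a = p (rngW G L [a])
  s_orth : ∀ a b : 𝒜, a ≠ b → star (s a) * s b = 0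
  ck : ∀ A : Set V, Bbar G L A →
    p A = (∑ᶠ a ∈ {a : 𝒜 | ∃ e, G.src e ∈ A ∧ L e = a},
      s a * p (relRng G L A [a]) * star (s a)) + p (A ∩ G.sinks)

/-- `s_α` for a word `α`: the product of the partial isometries of its letters
(junk value `0` on the empty word, which is never used). -/
def sWord {B : Type*} [NonUnitalRing B] (s : 𝒜 → B) : List 𝒜 → B
  | [] => 0
  | [a] => s a
  | a :: b :: w => s a * sWord s (b :: w)

/-- The range of a word in `L^#(E)` (`none` is the empty word, with range all
of `E^0`). -/
def owordRng (G : DirGraph V E) (L : E → 𝒜) : Option (List 𝒜) → Set V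
  | none => Set.univ
  | some w => rngW G L w

/-- The relative range of a word in `L^#(E)` with respect to `A` (`none` is
the empty word, with `r(A, ε) = A`). -/
def relRngE (G : DirGraph V E) (L : E → 𝒜) (A : Set V) : Option (List 𝒜) → Set V
  | none => A
  | some w => relRng G L A w

/-- The element `s_α p_A s_β*` of a representation, where `α`, `β` are words in
`L^#(E)` (`none` being the empty word `ε` with `s_ε` the identity). -/
def LRep.elt {B : Type*} [NonUnitalRing B] [StarRing B] {G : DirGraph V E} {L : E → 𝒜}
    (rep : LRep G L B) : Option (List 𝒜) → Set V → Option (List 𝒜) → B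
  | none, A, none => rep.p A
  | some α, A, none => sWord rep.s α * rep.p A
  | none, A, some β => rep.p A * star (sWord rep.s β)
  | some α, A, some β => sWord rep.s α * rep.p A * star (sWord rep.s β)

/-- A projection `q` is infinite if there is a partial isometry `u` with
`u* u = q`, `u u* ≤ q` and `u u* ≠ q`. -/
def IsInfiniteProjection (B : Type*) [NonUnitalRing B] [StarRing B] [PartialOrder B]
    (q : B) : Prop :=
  star q = q ∧ q * q = q ∧ ∃ u : B, star u * u = q ∧ u * star u ≤ q ∧ u * star u ≠ q

/-- A C*-algebra is AF if every finite subset can be approximated within any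
`ε > 0` from a finite-dimensional *-subalgebra. -/
def IsAFAlgebra (B : Type*) [NonUnitalNormedRing B] [StarRing B] [NormedSpace ℂ B] : Prop :=
  ∀ (F : Finset B) (ε : ℝ), 0 < ε →
    ∃ D : NonUnitalStarSubalgebra ℂ B, FiniteDimensional ℂ D ∧
      ∀ x ∈ F, ∃ y ∈ (D : Set B), ‖x - y‖ < ε

/-- A gauge action for a representation: a strongly continuous action of the
circle group by *-automorphisms fixing the projections and scaling the
generating partial isometries. -/
structure GaugeAction {B : Type*} [NonUnitalCStarAlgebra B]
    (G : DirGraph V E) (L : E → 𝒜) (rep : LRep G L B) where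
  γ : Circle → B ≃⋆ₐ[ℂ] B
  γ_mul : ∀ z w : Circle, γ (z * w) = (γ w).trans (γ z)
  γ_continuous : ∀ x : B, Continuous fun z => γ z x
  γ_s : ∀ (z : Circle) (a : 𝒜), γ z (rep.s a) = (z : ℂ) • rep.s a
  γ_p : ∀ (z : Circle) (A : Set V), Bbar G L A → γ z (rep.p A) = rep.p A

/-- The representation generates `B` as a C*-algebra. -/
def GeneratesAlg {B : Type*} [NonUnitalCStarAlgebra B]
    (G : DirGraph V E) (L : E → 𝒜) (rep : LRep G L B) : Prop :=
  closure (NonUnitalStarAlgebra.adjoin ℂ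
    ({x : B | ∃ a : 𝒜, x = rep.s a} ∪ {x : B | ∃ A : Set V, Bbar G L A ∧ x = rep.p A}) : Set B)
    = Set.univ

/-- A closed two-sided ideal of a C*-algebra (as a set). -/
def IsClosedTwoSidedIdealSet (B : Type*) [NonUnitalNormedRing B] [NormedSpace ℂ B]
    (I : Set B) : Prop :=
  IsClosed I ∧ (0 : B) ∈ I ∧ (∀ x ∈ I, ∀ y ∈ I, x + y ∈ I) ∧
    (∀ (c : ℂ), ∀ x ∈ I, c • x ∈ I) ∧ ∀ x ∈ I, ∀ y : B, x * y ∈ I ∧ y * x ∈ I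

/-- The closed two-sided ideal generated by an element. -/
def closedIdealGen (B : Type*) [NonUnitalNormedRing B] [NormedSpace ℂ B] (q : B) : Set B :=
  ⋂₀ {I : Set B | IsClosedTwoSidedIdealSet B I ∧ q ∈ I}


namespace AFAux

open Set

variable {V E 𝒜 : Type*} {G : DirGraph V E} {L : E → 𝒜}

/-! ### Path lemmas -/

def edgePath (G : DirGraph V E) (e : E) : GPath G :=
  ⟨[e], by simp, List.isChain_singleton e⟩

@[simp] lemma edgePath_label (e : E) : (edgePath G e).label L = [L e] := rfl
@[simp] lemma edgePath_source (e : E) : (edgePath G e).source = G.src e := rfl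
@[simp] lemma edgePath_range (e : E) : (edgePath G e).range = G.rng e := rfl
@[simp] lemma edgePath_length (e : E) : (edgePath G e).length = 1 := rfl

lemma label_ne_nil (p : GPath G) : p.label L ≠ [] := by
  simp [GPath.label, p.ne]

lemma label_length (p : GPath G) : (p.label L).length = p.length := by
  simp [GPath.label, GPath.length]

def appendPath (p q : GPath G) (h : p.range = q.source) : GPath G :=
  ⟨p.edges ++ q.edges, by simp [p.ne], by
    refine List.IsChain.append p.chain q.chain ?_
    intro x hx y hy
    rw [List.getLast?_eq_getLast p.ne, Option.mem_some_iff] at hx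
    rw [List.head?_eq_head q.ne, Option.mem_some_iff] at hy
    subst hx; subst hy; exact h⟩

@[simp] lemma appendPath_label (p q : GPath G) (h : p.range = q.source) :
    (appendPath p q h).label L = p.label L ++ q.label L := by
  simp [appendPath, GPath.label]

@[simp] lemma appendPath_source (p q : GPath G) (h : p.range = q.source) :
    (appendPath p q h).source = p.source := by
  simp [appendPath, GPath.source, List.head_append_left p.ne]

@[simp] lemma appendPath_range (p q : GPath G) (h : p.range = q.source) :
    (appendPath p q h).range = q.range := by
  simp [appendPath, GPath.range, List.getLast_append_of_ne_nil (h₂ := q.ne)]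

lemma exists_cons_split (p : GPath G) {a : 𝒜} {w : List 𝒜} (hp : p.label L = a :: w)
    (hw : w ≠ []) :
    ∃ (e : E) (q : GPath G), L e = a ∧ q.label L = w ∧ G.rng e = q.source ∧
      p.source = G.src e ∧ p.range = q.range := by
  obtain ⟨edges, ne, ch⟩ := p
  match edges, ne, ch, hp with
  | e :: rest, ne, ch, hp =>
    simp only [GPath.label, List.map_cons, List.cons.injEq] at hp
    obtain ⟨hea, hrest⟩ := hp
    have hrne : rest ≠ [] := by
      intro h; rw [h] at hrest; exact hw hrest.symm
    match rest, hrne, ch, hrest with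
    | f :: rest', _, ch, hrest =>
      obtain ⟨hef, ch'⟩ := List.isChain_cons_cons.mp ch
      refine ⟨e, ⟨f :: rest', by simp, ch'⟩, hea, hrest, ?_, ?_, ?_⟩
      · exact hef
      · rfl
      · simp [GPath.range, List.getLast_cons]

lemma mem_relRng_singleton {A : Set V} {a : 𝒜} {v : V} :
    v ∈ relRng G L A [a] ↔ ∃ e, L e = a ∧ G.src e ∈ A ∧ G.rng e = v := by
  constructor
  · rintro ⟨⟨edges, ne, ch⟩, hlab, hsrc, hrng⟩
    match edges, ne, ch, hlab with
    | [e], _, _, hlab =>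
      simp only [GPath.label, List.map_cons, List.map_nil, List.cons.injEq] at hlab
      exact ⟨e, hlab.1, hsrc, hrng⟩
    | e :: f :: r, _, _, hlab =>
      exfalso
      have := congrArg List.length hlab
      simp [GPath.label] at this
  · rintro ⟨e, rfl, h1, h2⟩
    exact ⟨edgePath G e, rfl, h1, h2⟩

lemma relRng_cons (A : Set V) (a : 𝒜) (w : List 𝒜) (hw : w ≠ []) :
    relRng G L A (a :: w) = relRng G L (relRng G L A [a]) w := by
  ext v
  constructor
  · rintro ⟨p, hlab, hsrc, hrng⟩
    obtain ⟨e, q, he, hq, hrq, hs, hr⟩ := exists_cons_split p hlab hw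
    refine ⟨q, hq, ?_, by rw [← hr]; exact hrng⟩
    exact mem_relRng_singleton.mpr ⟨e, he, by rwa [← hs], hrq⟩
  · rintro ⟨q, hq, hqs, hqr⟩
    obtain ⟨e, hea, hsA, her⟩ := mem_relRng_singleton.mp hqs
    refine ⟨appendPath (edgePath G e) q (by simpa using her), ?_, ?_, ?_⟩
    · simp [hea, hq]
    · simpa using hsA
    · simpa using hqr

lemma rngW_eq_relRng_univ (w : List 𝒜) : rngW G L w = relRng G L Set.univ w := by
  ext v; simp [rngW, relRng]

lemma rngW_cons (a : 𝒜) (w : List 𝒜) (hw : w ≠ []) :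
    rngW G L (a :: w) = relRng G L (rngW G L [a]) w := by
  rw [rngW_eq_relRng_univ, relRng_cons _ _ _ hw, ← rngW_eq_relRng_univ]

lemma relRng_append (A : Set V) {u v : List 𝒜} (hu : u ≠ []) (hv : v ≠ []) :
    relRng G L A (u ++ v) = relRng G L (relRng G L A u) v := by
  induction u generalizing A with
  | nil => exact absurd rfl hu
  | cons a u' ih =>
    by_cases h : u' = []
    · subst h; exact relRng_cons A a v hv
    · rw [show (a :: u') ++ v = a :: (u' ++ v) from rfl,
        relRng_cons _ _ _ (by simp [h]), ih _ h, ← relRng_cons _ _ _ h]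

lemma relRng_subset_rngW (A : Set V) (w : List 𝒜) : relRng G L A w ⊆ rngW G L w :=
  fun _ ⟨p, h1, _, h3⟩ => ⟨p, h1, h3⟩

lemma relRng_empty (w : List 𝒜) : relRng G L (∅ : Set V) w = ∅ := by
  ext v; simp [relRng]

lemma rngW_eq_empty {w : List 𝒜} (h : ¬ IsLabelWord G L w) : rngW G L w = ∅ :=
  Set.eq_empty_iff_forall_notMem.2 fun _ ⟨p, h1, _⟩ => h ⟨p, h1⟩

lemma relRng_eq_empty {w : List 𝒜} (h : ¬ IsLabelWord G L w) (A : Set V) :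
    relRng G L A w = ∅ :=
  Set.subset_empty_iff.1 (rngW_eq_empty h ▸ relRng_subset_rngW A w)

/-! ### The path-length bound from condition (a) -/

lemma exists_bound (hL : Function.Surjective L) (hCondA : CondA G L)
    (𝒜₀ : Set 𝒜) (h𝒜₀ : 𝒜₀.Finite) :
    ∃ m0 : ℕ, 1 ≤ m0 ∧ ∀ p : GPath G, (∀ a ∈ p.label L, a ∈ 𝒜₀) → p.length ≤ m0 := by
  classical
  set S := h𝒜₀.toFinset with hS
  obtain ⟨m0, hm0, H⟩ := hCondA S.card (fun i => rngW G L [(S.equivFin.symm i : 𝒜)])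
    (fun i => by
      obtain ⟨e, he⟩ := hL (S.equivFin.symm i : 𝒜)
      exact Bbar.base _ ⟨edgePath G e, by simp [he]⟩) 1 le_rfl
  refine ⟨m0, hm0, fun p hp => ?_⟩
  by_contra hlen
  push_neg at hlen
  have hℓpos : 0 < p.edges.length := List.length_pos_iff.2 p.ne
  have hℓ : p.edges.length = p.length := rfl
  have hmem : ∀ (k : ℕ) (hk : k < p.edges.length), L (p.edges.get ⟨k, hk⟩) ∈ S := by
    intro k hk
    have h1 : L (p.edges.get ⟨k, hk⟩) ∈ p.label L :=
      List.mem_map_of_mem (f := L) (p.edges.get_mem _)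
    simpa [hS, Set.Finite.mem_toFinset] using hp _ h1
  set ι : ℕ → Fin S.card := fun k =>
    if hk : k < p.edges.length then S.equivFin ⟨L (p.edges.get ⟨k, hk⟩), hmem k hk⟩
    else S.equivFin ⟨L (p.edges.get ⟨0, hℓpos⟩), hmem 0 hℓpos⟩ with hι
  have hchain : ∀ (j : ℕ) (hj : j + 1 < p.edges.length),
      G.rng (p.edges.get ⟨j, Nat.lt_of_succ_lt hj⟩) = G.src (p.edges.get ⟨j + 1, hj⟩) :=
    fun j hj => List.isChain_iff_getElem.mp p.chain j (by omega)
  refine H p.length hlen ι ?_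
  refine ⟨fun j => edgePath G (p.edges.get ⟨j.1 + 1, by have := j.2; omega⟩),
    fun j => ⟨le_rfl, ?_, ?_⟩, fun j hj => ?_⟩
  · -- source ∈ rngW [letter j]
    have hjlt : j.1 < p.edges.length := by have := j.2; omega
    have hjlt' : j.1 + 1 < p.edges.length := by have := j.2; omega
    simp only [hι, dif_pos hjlt, Equiv.symm_apply_apply, edgePath_source]
    rw [← hchain j.1 hjlt']
    exact ⟨edgePath G (p.edges.get ⟨j.1, hjlt⟩), rfl, rfl⟩
  · -- range ∈ rngW [letter (j+1)]
    have hjlt : j.1 + 1 < p.edges.length := by have := j.2; omega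
    simp only [hι, dif_pos hjlt, Equiv.symm_apply_apply, edgePath_range]
    exact ⟨edgePath G (p.edges.get ⟨j.1 + 1, hjlt⟩), rfl, rfl⟩
  · -- composability
    have h2 : j + 2 < p.edges.length := by omega
    simpa using hchain (j + 1) h2

/-! ### Representation lemmas -/

def BbarE (G : DirGraph V E) (L : E → 𝒜) (A : Set V) : Prop := Bbar G L A ∨ A = ∅

lemma bbarE_empty : BbarE G L (∅ : Set V) := Or.inr rfl

lemma bbarE_inter {A A' : Set V} (h : BbarE G L A) (h' : BbarE G L A') :
    BbarE G L (A ∩ A') := by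
  rcases h with h | rfl
  · rcases h' with h' | rfl
    · exact Or.inl (Bbar.inter _ _ h h')
    · exact Or.inr (Set.inter_empty A)
  · exact Or.inr (Set.empty_inter A')

lemma bbarE_relRng {A : Set V} (h : BbarE G L A) (w : List 𝒜) :
    BbarE G L (relRng G L A w) := by
  rcases h with h | rfl
  · by_cases hw : IsLabelWord G L w
    · exact Or.inl (Bbar.rel A w h hw)
    · exact Or.inr (relRng_eq_empty hw A)
  · exact Or.inr (relRng_empty w)

lemma bbarE_rngW (w : List 𝒜) : BbarE G L (rngW G L w) := by
  by_cases hw : IsLabelWord G L w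
  · exact Or.inl (Bbar.base w hw)
  · exact Or.inr (rngW_eq_empty hw)

section Rep

variable {B : Type*} [NonUnitalCStarAlgebra B] (rep : LRep G L B)

lemma pE_sa {A : Set V} (h : BbarE G L A) : star (rep.p A) = rep.p A := by
  rcases h with h | rfl
  · exact rep.p_sa A h
  · rw [rep.p_empty, star_zero]

lemma pE_mul {A A' : Set V} (h : BbarE G L A) (h' : BbarE G L A') :
    rep.p A * rep.p A' = rep.p (A ∩ A') := by
  rcases h with h | rfl
  · rcases h' with h' | rfl
    · exact rep.p_mul _ _ h h'
    · rw [rep.p_empty, Set.inter_empty, rep.p_empty, mul_zero]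
  · rw [rep.p_empty, Set.empty_inter, rep.p_empty, zero_mul]

lemma pE_s {A : Set V} (h : BbarE G L A) (a : 𝒜) :
    rep.p A * rep.s a = rep.s a * rep.p (relRng G L A [a]) := by
  rcases h with h | rfl
  · exact rep.p_s A a h
  · rw [rep.p_empty, relRng_empty, rep.p_empty, zero_mul, mul_zero]

lemma sWord_cons (a : 𝒜) {w : List 𝒜} (hw : w ≠ []) :
    sWord rep.s (a :: w) = rep.s a * sWord rep.s w := by
  match w, hw with
  | b :: w', _ => rfl

lemma sWord_append {u v : List 𝒜} (hu : u ≠ []) (hv : v ≠ []) :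
    sWord rep.s (u ++ v) = sWord rep.s u * sWord rep.s v := by
  induction u with
  | nil => exact absurd rfl hu
  | cons a u' ih =>
    by_cases h : u' = []
    · subst h; exact sWord_cons rep a hv
    · rw [show (a :: u') ++ v = a :: (u' ++ v) from rfl,
        sWord_cons rep a (by simp [h]), ih h, sWord_cons rep a h, mul_assoc]

lemma p_sWord {A : Set V} (hA : BbarE G L A) {w : List 𝒜} (hw : w ≠ []) :
    rep.p A * sWord rep.s w = sWord rep.s w * rep.p (relRng G L A w) := by
  induction w generalizing A with
  | nil => exact absurd rfl hw
  | cons a w' ih =>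
    by_cases h : w' = []
    · subst h; exact pE_s rep hA a
    · rw [sWord_cons rep a h, ← mul_assoc, pE_s rep hA a, mul_assoc,
        ih (bbarE_relRng hA [a]) h, ← mul_assoc, ← sWord_cons rep a h,
        relRng_cons A a w' h]

lemma star_sWord_p {A : Set V} (hA : BbarE G L A) {w : List 𝒜} (hw : w ≠ []) :
    star (sWord rep.s w) * rep.p A = rep.p (relRng G L A w) * star (sWord rep.s w) := by
  have h := congrArg star (p_sWord rep hA hw)
  rw [star_mul, star_mul, pE_sa rep hA, pE_sa rep (bbarE_relRng hA w)] at h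
  exact h

lemma star_sWord_sWord {w : List 𝒜} (hw : w ≠ []) :
    star (sWord rep.s w) * sWord rep.s w = rep.p (rngW G L w) := by
  induction w with
  | nil => exact absurd rfl hw
  | cons a w' ih =>
    by_cases h : w' = []
    · subst h; exact rep.s_s a
    · have hsub : rngW G L w' ∩ relRng G L (rngW G L [a]) w' =
          relRng G L (rngW G L [a]) w' :=
        Set.inter_eq_self_of_subset_right (relRng_subset_rngW _ _)
      rw [sWord_cons rep a h, star_mul, mul_assoc, ← mul_assoc (star (rep.s a)),
        rep.s_s a, p_sWord rep (bbarE_rngW [a]) h, ← mul_assoc, ih h,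
        pE_mul rep (bbarE_rngW w') (bbarE_relRng (bbarE_rngW [a]) w'), hsub,
        ← rngW_cons a w' h]

lemma sWord_eq_zero {w : List 𝒜} (hw : w ≠ []) (h : rngW G L w = ∅) :
    sWord rep.s w = 0 := by
  have h1 : star (sWord rep.s w) * sWord rep.s w = 0 := by
    rw [star_sWord_sWord rep hw, h, rep.p_empty]
  have h2 : ‖sWord rep.s w‖ * ‖sWord rep.s w‖ = 0 := by
    rw [← CStarRing.norm_star_mul_self, h1, norm_zero]
  rcases mul_self_eq_zero.mp h2 with h3
  exact norm_eq_zero.mp h3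

lemma star_sWord_orth {w v : List 𝒜} (hw : w ≠ []) (hv : v ≠ [])
    (h1 : ¬ w <+: v) (h2 : ¬ v <+: w) :
    star (sWord rep.s w) * sWord rep.s v = 0 := by
  induction w generalizing v with
  | nil => exact absurd rfl hw
  | cons a w' ih =>
    match v, hv with
    | b :: v', _ =>
      by_cases hab : a = b
      · subst hab
        have hw' : w' ≠ [] := by
          rintro rfl
          exact h1 (by simpa using List.nil_prefix)
        have hv' : v' ≠ [] := by
          rintro rfl
          exact h2 (by simpa using List.nil_prefix)
        have hnp1 : ¬ w' <+: v' := fun hp => h1 (List.cons_prefix_cons.2 ⟨rfl, hp⟩)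
        have hnp2 : ¬ v' <+: w' := fun hp => h2 (List.cons_prefix_cons.2 ⟨rfl, hp⟩)
        rw [sWord_cons rep a hw', sWord_cons rep a hv', star_mul, mul_assoc,
          ← mul_assoc (star (rep.s a)), rep.s_s a,
          p_sWord rep (bbarE_rngW [a]) hv', ← mul_assoc,
          ih hw' hv' hnp1 hnp2, zero_mul]
      · by_cases hw' : w' = []
        · subst hw'
          by_cases hv' : v' = []
          · subst hv'; exact rep.s_orth a b hab
          · rw [sWord_cons rep b hv', show sWord rep.s [a] = rep.s a from rfl,
              ← mul_assoc, rep.s_orth a b hab, zero_mul]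
        · by_cases hv' : v' = []
          · subst hv'
            rw [sWord_cons rep a hw', show sWord rep.s [b] = rep.s b from rfl,
              star_mul, mul_assoc, rep.s_orth a b hab, mul_zero]
          · rw [sWord_cons rep a hw', sWord_cons rep b hv', star_mul, mul_assoc,
              ← mul_assoc (star (rep.s a)), rep.s_orth a b hab, zero_mul, mul_zero]

lemma star_sWord_prefix {w v : List 𝒜} (hw : w ≠ []) (hv : v ≠ []) :
    star (sWord rep.s w) * sWord rep.s (w ++ v) =
      rep.p (rngW G L w) * sWord rep.s v := by
  rw [sWord_append rep hw hv, ← mul_assoc, star_sWord_sWord rep hw]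

/-! ### `elt` machinery -/

def eltL (rep : LRep G L B) : Option (List 𝒜) → B → B
  | none, x => x
  | some w, x => sWord rep.s w * x

def eltR (rep : LRep G L B) : Option (List 𝒜) → B → B
  | none, x => x
  | some w, x => x * star (sWord rep.s w)

def owAppend (o : Option (List 𝒜)) (w : List 𝒜) : Option (List 𝒜) :=
  some (o.elim w (· ++ w))

lemma elt_eq (oα : Option (List 𝒜)) (C : Set V) (oβ : Option (List 𝒜)) :
    rep.elt oα C oβ = eltL rep oα (eltR rep oβ (rep.p C)) := by
  match oα, oβ with
  | none, none => rfl
  | some α, none => rfl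
  | none, some β => rfl
  | some α, some β => exact mul_assoc _ _ _

lemma eltL_mul (o : Option (List 𝒜)) (x y : B) :
    eltL rep o x * y = eltL rep o (x * y) := by
  match o with
  | none => rfl
  | some w => exact mul_assoc _ _ _

lemma mul_eltR (o : Option (List 𝒜)) (x y : B) :
    x * eltR rep o y = eltR rep o (x * y) := by
  match o with
  | none => rfl
  | some w => exact (mul_assoc _ _ _).symm

lemma eltL_eltR_comm (o o' : Option (List 𝒜)) (x : B) :
    eltL rep o (eltR rep o' x) = eltR rep o' (eltL rep o x) := by
  match o, o' with
  | none, _ => rfl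
  | some w, none => rfl
  | some w, some w' => exact (mul_assoc _ _ _).symm

@[simp] lemma eltL_zero (o : Option (List 𝒜)) : eltL rep o (0 : B) = 0 := by
  match o with
  | none => rfl
  | some w => exact mul_zero _

@[simp] lemma eltR_zero (o : Option (List 𝒜)) : eltR rep o (0 : B) = 0 := by
  match o with
  | none => rfl
  | some w => exact zero_mul _

lemma grand (oα oβ oμ oν : Option (List 𝒜)) (C D : Set V) :
    rep.elt oα C oβ * rep.elt oμ D oν =
      eltL rep oα (eltR rep oν (eltR rep oβ (rep.p C) * eltL rep oμ (rep.p D))) := by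
  rw [elt_eq rep oα C oβ, elt_eq rep oμ D oν, eltL_mul, eltL_eltR_comm rep oμ oν,
    mul_eltR]

lemma eltL_eltL {o : Option (List 𝒜)} {w : List 𝒜}
    (ho : ∀ u, o = some u → u ≠ []) (hw : w ≠ []) (x : B) :
    eltL rep o (eltL rep (some w) x) = eltL rep (owAppend o w) x := by
  match o with
  | none => rfl
  | some u =>
    show sWord rep.s u * (sWord rep.s w * x) = sWord rep.s (u ++ w) * x
    rw [sWord_append rep (ho u rfl) hw, mul_assoc]

lemma eltR_eltR {o : Option (List 𝒜)} {w : List 𝒜}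
    (ho : ∀ u, o = some u → u ≠ []) (hw : w ≠ []) (x : B) :
    eltR rep o (eltR rep (some w) x) = eltR rep (owAppend o w) x := by
  match o with
  | none => rfl
  | some u =>
    show x * star (sWord rep.s w) * star (sWord rep.s u) =
      x * star (sWord rep.s (u ++ w))
    rw [sWord_append rep (ho u rfl) hw, star_mul, mul_assoc]

lemma star_elt {C : Set V} (hC : BbarE G L C) (oα oβ : Option (List 𝒜)) :
    star (rep.elt oα C oβ) = rep.elt oβ C oα := by
  match oα, oβ with
  | none, none => exact pE_sa rep hC
  | some α, none =>
    show star (sWord rep.s α * rep.p C) = rep.p C * star (sWord rep.s α)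
    rw [star_mul, pE_sa rep hC]
  | none, some β =>
    show star (rep.p C * star (sWord rep.s β)) = sWord rep.s β * rep.p C
    rw [star_mul, star_star, pE_sa rep hC]
  | some α, some β =>
    show star (sWord rep.s α * rep.p C * star (sWord rep.s β)) =
      sWord rep.s β * rep.p C * star (sWord rep.s α)
    rw [star_mul, star_mul, star_star, pE_sa rep hC, mul_assoc]

lemma elt_left_zero {w : List 𝒜} (h : sWord rep.s w = 0) (C : Set V)
    (oβ : Option (List 𝒜)) : rep.elt (some w) C oβ = 0 := by
  match oβ with
  | none => show sWord rep.s w * rep.p C = 0; rw [h, zero_mul]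
  | some β =>
    show sWord rep.s w * rep.p C * star (sWord rep.s β) = 0
    rw [h, zero_mul, zero_mul]

lemma elt_right_zero {w : List 𝒜} (h : sWord rep.s w = 0) (C : Set V)
    (oα : Option (List 𝒜)) : rep.elt oα C (some w) = 0 := by
  match oα with
  | none => show rep.p C * star (sWord rep.s w) = 0; rw [h, star_zero, mul_zero]
  | some α =>
    show sWord rep.s α * rep.p C * star (sWord rep.s w) = 0
    rw [h, star_zero, mul_zero]

end Rep

/-! ### The finite families -/

def Words (𝒜₀ : Set 𝒜) (m0 : ℕ) : Set (List 𝒜) :=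
  {w | w ≠ [] ∧ (∀ a ∈ w, a ∈ 𝒜₀) ∧ w.length ≤ m0}

variable (G L) in
def BS (𝒜₀ : Set 𝒜) (𝒞₀ : Set (Set V)) (m0 : ℕ) : Set (Set V) :=
  𝒞₀ ∪ (rngW G L '' Words 𝒜₀ m0)

variable (G L) in
def DS (𝒜₀ : Set 𝒜) (𝒞₀ : Set (Set V)) (m0 : ℕ) : Set (Set V) :=
  BS G L 𝒜₀ 𝒞₀ m0 ∪
    ((fun q : Set V × List 𝒜 => relRng G L q.1 q.2) ''
      (BS G L 𝒜₀ 𝒞₀ m0 ×ˢ Words 𝒜₀ m0))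

variable (G L) in
def CS (𝒜₀ : Set 𝒜) (𝒞₀ : Set (Set V)) (m0 : ℕ) : Set (Set V) :=
  insert ∅ (Set.sInter '' {𝒯 : Set (Set V) | 𝒯 ⊆ DS G L 𝒜₀ 𝒞₀ m0 ∧ 𝒯.Nonempty})

def OWords (𝒜₀ : Set 𝒜) (m0 : ℕ) : Set (Option (List 𝒜)) :=
  insert none (some '' Words 𝒜₀ m0)

section Fin

variable {𝒜₀ : Set 𝒜} {𝒞₀ : Set (Set V)} {m0 : ℕ}

lemma exists_lift : ∀ (w : List 𝒜), (∀ a ∈ w, a ∈ 𝒜₀) →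
    ∃ l : List ↥𝒜₀, l.map Subtype.val = w := by
  intro w
  induction w with
  | nil => exact fun _ => ⟨[], rfl⟩
  | cons a w' ih =>
    intro h
    obtain ⟨l', hl'⟩ := ih fun b hb => h b (List.mem_cons_of_mem a hb)
    exact ⟨⟨a, h a (List.mem_cons_self (a := a) (l := w'))⟩ :: l', by simp [hl']⟩

lemma words_finite (h : 𝒜₀.Finite) : (Words 𝒜₀ m0).Finite := by
  haveI := h.to_subtype
  refine ((List.finite_length_le ↥𝒜₀ m0).image (List.map Subtype.val)).subset ?_
  rintro w ⟨hne, hmem, hlen⟩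
  obtain ⟨l, hl⟩ := exists_lift w hmem
  refine ⟨l, ?_, hl⟩
  have : l.length = w.length := by rw [← hl, List.length_map]
  simpa [this] using hlen

lemma bs_finite (h : 𝒜₀.Finite) (h' : 𝒞₀.Finite) : (BS G L 𝒜₀ 𝒞₀ m0).Finite :=
  h'.union ((words_finite h).image _)

lemma ds_finite (h : 𝒜₀.Finite) (h' : 𝒞₀.Finite) : (DS G L 𝒜₀ 𝒞₀ m0).Finite :=
  (bs_finite h h').union (((bs_finite h h').prod (words_finite h)).image _)

lemma cs_finite (h : 𝒜₀.Finite) (h' : 𝒞₀.Finite) : (CS G L 𝒜₀ 𝒞₀ m0).Finite := by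
  refine Set.Finite.insert _ (Set.Finite.image _ ?_)
  exact ((ds_finite h h').finite_subsets).subset fun 𝒯 h𝒯 => h𝒯.1

lemma owords_finite (h : 𝒜₀.Finite) : (OWords 𝒜₀ m0).Finite :=
  Set.Finite.insert _ ((words_finite h).image _)

end Fin

/-! ### Closure properties of the families -/

section Closure

variable {𝒜₀ : Set 𝒜} {𝒞₀ : Set (Set V)} {m0 : ℕ}

lemma bs_bbarE (h𝒞₀ : ∀ A ∈ 𝒞₀, Bbar G L A) {A : Set V} (hA : A ∈ BS G L 𝒜₀ 𝒞₀ m0) :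
    BbarE G L A := by
  rcases hA with hA | ⟨w, _, rfl⟩
  · exact Or.inl (h𝒞₀ A hA)
  · exact bbarE_rngW w

lemma ds_bbarE (h𝒞₀ : ∀ A ∈ 𝒞₀, Bbar G L A) {A : Set V} (hA : A ∈ DS G L 𝒜₀ 𝒞₀ m0) :
    BbarE G L A := by
  rcases hA with hA | ⟨⟨B', w⟩, ⟨hB', _⟩, rfl⟩
  · exact bs_bbarE h𝒞₀ hA
  · exact bbarE_relRng (bs_bbarE h𝒞₀ hB') w

lemma bbarE_sInter {𝒯 : Set (Set V)} (hfin : 𝒯.Finite) : 𝒯.Nonempty →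
    (∀ A ∈ 𝒯, BbarE G L A) → BbarE G L (⋂₀ 𝒯) := by
  refine Set.Finite.induction_on _ hfin (fun hne _ => absurd hne (by simp)) ?_
  intro a s ha hs ih hne h
  rw [Set.sInter_insert]
  rcases s.eq_empty_or_nonempty with rfl | hne'
  · simpa using h a (Set.mem_insert a ∅)
  · exact bbarE_inter (h a (Set.mem_insert a s))
      (ih hne' fun A hA => h A (Set.mem_insert_of_mem a hA))

lemma cs_bbarE (h𝒞₀ : ∀ A ∈ 𝒞₀, Bbar G L A) (h𝒜₀ : 𝒜₀.Finite) (h𝒞₀f : 𝒞₀.Finite)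
    {C : Set V} (hC : C ∈ CS G L 𝒜₀ 𝒞₀ m0) : BbarE G L C := by
  rcases hC with rfl | ⟨𝒯, ⟨hsub, hne⟩, rfl⟩
  · exact bbarE_empty
  · exact bbarE_sInter ((ds_finite h𝒜₀ h𝒞₀f).subset hsub) hne
      fun A hA => ds_bbarE h𝒞₀ (hsub hA)

lemma wlrE (sa : StandingAssumptions G L) {A A' : Set V} (hA : BbarE G L A)
    (hA' : BbarE G L A') (w : List 𝒜) :
    relRng G L (A ∩ A') w = relRng G L A w ∩ relRng G L A' w := by
  rcases hA with hA | rfl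
  · rcases hA' with hA' | rfl
    · by_cases hw : IsLabelWord G L w
      · exact (sa.wlr A A' hA hA' w hw).symm
      · rw [relRng_eq_empty hw, relRng_eq_empty hw, relRng_eq_empty hw,
          Set.empty_inter]
    · rw [Set.inter_empty, relRng_empty, Set.inter_empty]
  · rw [Set.empty_inter, relRng_empty, Set.empty_inter]

lemma wlr_sInter (sa : StandingAssumptions G L) {𝒯 : Set (Set V)} (hfin : 𝒯.Finite)
    (w : List 𝒜) : 𝒯.Nonempty → (∀ A ∈ 𝒯, BbarE G L A) →
    relRng G L (⋂₀ 𝒯) w = ⋂₀ ((fun A => relRng G L A w) '' 𝒯) := by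
  refine Set.Finite.induction_on _ hfin (fun hne _ => absurd hne (by simp)) ?_
  intro a s ha hs ih hne h
  rcases s.eq_empty_or_nonempty with rfl | hne'
  · simp
  · rw [Set.sInter_insert, Set.image_insert_eq, Set.sInter_insert,
      wlrE sa (h a (Set.mem_insert a s))
        (bbarE_sInter hs hne' fun A hA => h A (Set.mem_insert_of_mem a hA)) w,
      ih hne' fun A hA => h A (Set.mem_insert_of_mem a hA)]

lemma cs_empty : (∅ : Set V) ∈ CS G L 𝒜₀ 𝒞₀ m0 := Set.mem_insert _ _

lemma cs_inter {C D : Set V} (hC : C ∈ CS G L 𝒜₀ 𝒞₀ m0) (hD : D ∈ CS G L 𝒜₀ 𝒞₀ m0) :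
    C ∩ D ∈ CS G L 𝒜₀ 𝒞₀ m0 := by
  rcases hC with rfl | ⟨𝒯, ⟨hsub, hne⟩, rfl⟩
  · rw [Set.empty_inter]; exact cs_empty
  rcases hD with rfl | ⟨𝒯', ⟨hsub', hne'⟩, rfl⟩
  · rw [Set.inter_empty]; exact cs_empty
  exact Set.mem_insert_of_mem _ ⟨𝒯 ∪ 𝒯', ⟨Set.union_subset hsub hsub',
    hne.mono Set.subset_union_left⟩, Set.sInter_union 𝒯 𝒯'⟩

lemma cs_bs {A : Set V} (hA : A ∈ BS G L 𝒜₀ 𝒞₀ m0) : A ∈ CS G L 𝒜₀ 𝒞₀ m0 :=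
  Set.mem_insert_of_mem _ ⟨{A}, ⟨Set.singleton_subset_iff.2 (Or.inl hA),
    Set.singleton_nonempty A⟩, Set.sInter_singleton A⟩

lemma cs_rngW {w : List 𝒜} (hw : w ∈ Words 𝒜₀ m0) :
    rngW G L w ∈ CS G L 𝒜₀ 𝒞₀ m0 :=
  cs_bs (Or.inr ⟨w, hw, rfl⟩)

lemma ds_relRng (hbound : ∀ w : List 𝒜, (∀ a ∈ w, a ∈ 𝒜₀) → IsLabelWord G L w →
      w.length ≤ m0)
    {A : Set V} (hA : A ∈ DS G L 𝒜₀ 𝒞₀ m0) {w : List 𝒜} (hw : w ∈ Words 𝒜₀ m0) :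
    relRng G L A w ∈ DS G L 𝒜₀ 𝒞₀ m0 ∨ relRng G L A w = ∅ := by
  obtain ⟨hwne, hwmem, hwlen⟩ := hw
  rcases hA with hA | ⟨⟨B', u⟩, ⟨hB', hu⟩, rfl⟩
  · exact Or.inl (Or.inr ⟨(A, w), ⟨hA, hwne, hwmem, hwlen⟩, rfl⟩)
  · obtain ⟨hune, humem, hulen⟩ := hu
    rw [show relRng G L (relRng G L B' u) w = relRng G L B' (u ++ w) from
      (relRng_append B' hune hwne).symm]
    have hletters : ∀ a ∈ u ++ w, a ∈ 𝒜₀ := by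
      intro a ha
      rcases List.mem_append.mp ha with ha | ha
      exacts [humem a ha, hwmem a ha]
    by_cases hlen : (u ++ w).length ≤ m0
    · exact Or.inl (Or.inr ⟨(B', u ++ w), ⟨hB', by simp [hune], hletters, hlen⟩, rfl⟩)
    · refine Or.inr (Set.subset_empty_iff.1 ?_)
      have : rngW G L (u ++ w) = ∅ :=
        rngW_eq_empty fun hlab => hlen (hbound _ hletters hlab)
      rw [← this]
      exact relRng_subset_rngW B' (u ++ w)

lemma cs_relRng (sa : StandingAssumptions G L) (h𝒞₀ : ∀ A ∈ 𝒞₀, Bbar G L A)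
    (h𝒜₀ : 𝒜₀.Finite) (h𝒞₀f : 𝒞₀.Finite)
    (hbound : ∀ w : List 𝒜, (∀ a ∈ w, a ∈ 𝒜₀) → IsLabelWord G L w →
      w.length ≤ m0)
    {C : Set V} (hC : C ∈ CS G L 𝒜₀ 𝒞₀ m0) {w : List 𝒜} (hw : w ∈ Words 𝒜₀ m0) :
    relRng G L C w ∈ CS G L 𝒜₀ 𝒞₀ m0 := by
  rcases hC with rfl | ⟨𝒯, ⟨hsub, hne⟩, rfl⟩
  · rw [relRng_empty]; exact cs_empty
  rw [wlr_sInter sa ((ds_finite h𝒜₀ h𝒞₀f).subset hsub) w hne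
    (fun A hA => ds_bbarE h𝒞₀ (hsub hA))]
  by_cases hz : ∃ A ∈ 𝒯, relRng G L A w = ∅
  · obtain ⟨A, hA, hAz⟩ := hz
    have : ⋂₀ ((fun A => relRng G L A w) '' 𝒯) = ∅ :=
      Set.subset_empty_iff.1 (hAz ▸ Set.sInter_subset_of_mem
        (Set.mem_image_of_mem _ hA))
    rw [this]; exact cs_empty
  · push_neg at hz
    refine Set.mem_insert_of_mem _ ⟨_, ⟨?_, hne.image _⟩, rfl⟩
    rintro X ⟨A, hA, rfl⟩
    rcases ds_relRng hbound (hsub hA) ⟨hw.1, hw.2.1, hw.2.2⟩ with h | h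
    · exact h
    · exact absurd h (hz A hA).ne_empty

end Closure

/-! ### The finite spanning set and its closure properties -/

section TSpan

variable {B : Type*} [NonUnitalCStarAlgebra B]

variable (rep : LRep G L B) in
def TS (𝒜₀ : Set 𝒜) (𝒞₀ : Set (Set V)) (m0 : ℕ) : Set B :=
  (fun q : Option (List 𝒜) × Set V × Option (List 𝒜) => rep.elt q.1 q.2.1 q.2.2) ''
    (OWords 𝒜₀ m0 ×ˢ CS G L 𝒜₀ 𝒞₀ m0 ×ˢ OWords 𝒜₀ m0)

variable {rep : LRep G L B} {𝒜₀ : Set 𝒜} {𝒞₀ : Set (Set V)} {m0 : ℕ}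

lemma mem_TS {oα oβ : Option (List 𝒜)} {C : Set V} (h1 : oα ∈ OWords 𝒜₀ m0)
    (h2 : C ∈ CS G L 𝒜₀ 𝒞₀ m0) (h3 : oβ ∈ OWords 𝒜₀ m0) :
    rep.elt oα C oβ ∈ TS rep 𝒜₀ 𝒞₀ m0 :=
  ⟨(oα, C, oβ), ⟨h1, h2, h3⟩, rfl⟩

lemma ts_finite (h : 𝒜₀.Finite) (h' : 𝒞₀.Finite) : (TS rep 𝒜₀ 𝒞₀ m0).Finite :=
  Set.Finite.image _
    ((owords_finite h).prod ((cs_finite h h').prod (owords_finite h)))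

def GoodO (𝒜₀ : Set 𝒜) (o : Option (List 𝒜)) : Prop :=
  ∀ w, o = some w → (w ≠ [] ∧ ∀ a ∈ w, a ∈ 𝒜₀)

lemma good_of_mem {o : Option (List 𝒜)} (h : o ∈ OWords 𝒜₀ m0) : GoodO 𝒜₀ o := by
  rcases h with h | ⟨w, hw, rfl⟩
  · rintro u hu; rw [h] at hu; exact absurd hu (by simp)
  · rintro u hu
    rw [Option.some.injEq] at hu
    subst hu
    exact ⟨hw.1, hw.2.1⟩

lemma good_owAppend {o : Option (List 𝒜)} {w : List 𝒜} (ho : GoodO 𝒜₀ o)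
    (hw : w ≠ []) (hwa : ∀ a ∈ w, a ∈ 𝒜₀) : GoodO 𝒜₀ (owAppend o w) := by
  intro u hu
  match o with
  | none =>
    rw [show owAppend none w = some w from rfl, Option.some.injEq] at hu
    subst hu; exact ⟨hw, hwa⟩
  | some v =>
    rw [show owAppend (some v) w = some (v ++ w) from rfl, Option.some.injEq] at hu
    subst hu
    refine ⟨by simp [hw], fun a ha => ?_⟩
    rcases List.mem_append.mp ha with ha | ha
    exacts [(ho v rfl).2 a ha, hwa a ha]

lemma owords_cases {o : Option (List 𝒜)} (h : o ∈ OWords 𝒜₀ m0) :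
    o = none ∨ ∃ w ∈ Words 𝒜₀ m0, o = some w := by
  rcases h with h | ⟨w, hw, rfl⟩
  · exact Or.inl h
  · exact Or.inr ⟨w, hw, rfl⟩

lemma elt_good_mem
    (hbound : ∀ w : List 𝒜, (∀ a ∈ w, a ∈ 𝒜₀) → IsLabelWord G L w → w.length ≤ m0)
    {oα oβ : Option (List 𝒜)} {C : Set V}
    (h1 : GoodO 𝒜₀ oα) (hC : C ∈ CS G L 𝒜₀ 𝒞₀ m0) (h3 : GoodO 𝒜₀ oβ) :
    rep.elt oα C oβ ∈ insert (0 : B) (TS rep 𝒜₀ 𝒞₀ m0) := by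
  have hz : ∀ w : List 𝒜, w ≠ [] → (∀ a ∈ w, a ∈ 𝒜₀) → ¬ w.length ≤ m0 →
      sWord rep.s w = 0 := fun w hne hmem hlen =>
    sWord_eq_zero rep hne (rngW_eq_empty fun hlab => hlen (hbound w hmem hlab))
  have hα : oα ∈ OWords 𝒜₀ m0 ∨ rep.elt oα C oβ = 0 := by
    match oα with
    | none => exact Or.inl (Set.mem_insert _ _)
    | some w =>
      by_cases hlen : w.length ≤ m0
      · exact Or.inl (Set.mem_insert_of_mem _ ⟨w, ⟨(h1 w rfl).1, (h1 w rfl).2, hlen⟩, rfl⟩)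
      · exact Or.inr (elt_left_zero rep (hz w (h1 w rfl).1 (h1 w rfl).2 hlen) C oβ)
  rcases hα with hα | h0
  · have hβ : oβ ∈ OWords 𝒜₀ m0 ∨ rep.elt oα C oβ = 0 := by
      match oβ with
      | none => exact Or.inl (Set.mem_insert _ _)
      | some w =>
        by_cases hlen : w.length ≤ m0
        · exact Or.inl (Set.mem_insert_of_mem _ ⟨w, ⟨(h3 w rfl).1, (h3 w rfl).2, hlen⟩, rfl⟩)
        · exact Or.inr (elt_right_zero rep (hz w (h3 w rfl).1 (h3 w rfl).2 hlen) C oα)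
    rcases hβ with hβ | h0
    · exact Set.mem_insert_of_mem _ (mem_TS hα hC hβ)
    · rw [h0]; exact Set.mem_insert _ _
  · rw [h0]; exact Set.mem_insert _ _

lemma elt_of_midN {oα oν : Option (List 𝒜)} {M : B} {X : Set V}
    (h : M = rep.p X) :
    eltL rep oα (eltR rep oν M) = rep.elt oα X oν := by
  rw [h, ← elt_eq]

lemma elt_of_midL {oα oν : Option (List 𝒜)} {M : B} {w : List 𝒜} {X : Set V}
    (ho : ∀ u, oα = some u → u ≠ []) (hw : w ≠ [])
    (h : M = eltL rep (some w) (rep.p X)) :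
    eltL rep oα (eltR rep oν M) = rep.elt (owAppend oα w) X oν := by
  rw [h, ← eltL_eltR_comm rep (some w) oν, eltL_eltL rep ho hw, ← elt_eq]

lemma elt_of_midR {oα oν : Option (List 𝒜)} {M : B} {w : List 𝒜} {X : Set V}
    (ho : ∀ u, oν = some u → u ≠ []) (hw : w ≠ [])
    (h : M = eltR rep (some w) (rep.p X)) :
    eltL rep oα (eltR rep oν M) = rep.elt oα X (owAppend oν w) := by
  rw [h, eltR_eltR rep ho hw, ← elt_eq]

lemma star_TS (h𝒞₀ : ∀ A ∈ 𝒞₀, Bbar G L A) (h𝒜₀f : 𝒜₀.Finite) (h𝒞₀f : 𝒞₀.Finite)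
    {x : B} (hx : x ∈ TS rep 𝒜₀ 𝒞₀ m0) : star x ∈ TS rep 𝒜₀ 𝒞₀ m0 := by
  obtain ⟨⟨oα, C, oβ⟩, ⟨h1, h2, h3⟩, rfl⟩ := hx
  rw [star_elt rep (cs_bbarE h𝒞₀ h𝒜₀f h𝒞₀f h2)]
  exact mem_TS h3 h2 h1

lemma mul_TS (sa : StandingAssumptions G L) (h𝒞₀ : ∀ A ∈ 𝒞₀, Bbar G L A)
    (h𝒜₀f : 𝒜₀.Finite) (h𝒞₀f : 𝒞₀.Finite)
    (hbound : ∀ w : List 𝒜, (∀ a ∈ w, a ∈ 𝒜₀) → IsLabelWord G L w → w.length ≤ m0)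
    {x y : B} (hx : x ∈ TS rep 𝒜₀ 𝒞₀ m0) (hy : y ∈ TS rep 𝒜₀ 𝒞₀ m0) :
    x * y ∈ insert (0 : B) (TS rep 𝒜₀ 𝒞₀ m0) := by
  obtain ⟨⟨oα, C, oβ⟩, ⟨hoα, hC, hoβ⟩, rfl⟩ := hx
  obtain ⟨⟨oμ, D, oν⟩, ⟨hoμ, hD, hoν⟩, rfl⟩ := hy
  have hCb := cs_bbarE h𝒞₀ h𝒜₀f h𝒞₀f hC
  have hDb := cs_bbarE h𝒞₀ h𝒜₀f h𝒞₀f hD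
  rw [grand]
  rcases owords_cases hoβ with rfl | ⟨β, hβ, rfl⟩
  · rcases owords_cases hoμ with rfl | ⟨μ, hμ, rfl⟩
    · have hmid : eltR rep none (rep.p C) * eltL rep none (rep.p D) =
          rep.p (C ∩ D) := pE_mul rep hCb hDb
      rw [elt_of_midN hmid]
      exact elt_good_mem hbound (good_of_mem hoα) (cs_inter hC hD) (good_of_mem hoν)
    · have hμne : μ ≠ [] := hμ.1
      have hmid : eltR rep none (rep.p C) * eltL rep (some μ) (rep.p D) =
          eltL rep (some μ) (rep.p (relRng G L C μ ∩ D)) := by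
        show rep.p C * (sWord rep.s μ * rep.p D) =
          sWord rep.s μ * rep.p (relRng G L C μ ∩ D)
        rw [← mul_assoc, p_sWord rep hCb hμne, mul_assoc,
          pE_mul rep (bbarE_relRng hCb μ) hDb]
      rw [elt_of_midL (fun u hu => (good_of_mem hoα u hu).1) hμne hmid]
      exact elt_good_mem hbound (good_owAppend (good_of_mem hoα) hμne hμ.2.1)
        (cs_inter (cs_relRng sa h𝒞₀ h𝒜₀f h𝒞₀f hbound hC hμ) hD) (good_of_mem hoν)
  · rcases owords_cases hoμ with rfl | ⟨μ, hμ, rfl⟩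
    · have hβne : β ≠ [] := hβ.1
      have hmid : eltR rep (some β) (rep.p C) * eltL rep none (rep.p D) =
          eltR rep (some β) (rep.p (C ∩ relRng G L D β)) := by
        show rep.p C * star (sWord rep.s β) * rep.p D =
          rep.p (C ∩ relRng G L D β) * star (sWord rep.s β)
        rw [mul_assoc, star_sWord_p rep hDb hβne, ← mul_assoc,
          pE_mul rep hCb (bbarE_relRng hDb β)]
      rw [elt_of_midR (fun u hu => (good_of_mem hoν u hu).1) hβne hmid]
      exact elt_good_mem hbound (good_of_mem hoα)
        (cs_inter hC (cs_relRng sa h𝒞₀ h𝒜₀f h𝒞₀f hbound hD hβ))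
        (good_owAppend (good_of_mem hoν) hβne hβ.2.1)
    · have hβne : β ≠ [] := hβ.1
      have hμne : μ ≠ [] := hμ.1
      by_cases hpre : β <+: μ
      · obtain ⟨μ', rfl⟩ := hpre
        by_cases hμ'e : μ' = []
        · subst hμ'e
          have hmid : eltR rep (some β) (rep.p C) *
              eltL rep (some (β ++ [])) (rep.p D) =
              rep.p (C ∩ (rngW G L β ∩ D)) := by
            show rep.p C * star (sWord rep.s β) * (sWord rep.s (β ++ []) * rep.p D) =
              rep.p (C ∩ (rngW G L β ∩ D))
            rw [List.append_nil, mul_assoc, ← mul_assoc (star (sWord rep.s β)),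
              star_sWord_sWord rep hβne, pE_mul rep (bbarE_rngW β) hDb,
              pE_mul rep hCb (bbarE_inter (bbarE_rngW β) hDb)]
          rw [elt_of_midN hmid]
          exact elt_good_mem hbound (good_of_mem hoα)
            (cs_inter hC (cs_inter (cs_rngW hβ) hD)) (good_of_mem hoν)
        · have hμ'W : μ' ∈ Words 𝒜₀ m0 := by
            refine ⟨hμ'e, fun a ha => hμ.2.1 a (List.mem_append_right _ ha), ?_⟩
            have h := hμ.2.2
            rw [List.length_append] at h
            omega
          have hmid : eltR rep (some β) (rep.p C) *
              eltL rep (some (β ++ μ')) (rep.p D) =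
              eltL rep (some μ') (rep.p (relRng G L (C ∩ rngW G L β) μ' ∩ D)) := by
            show rep.p C * star (sWord rep.s β) * (sWord rep.s (β ++ μ') * rep.p D) =
              sWord rep.s μ' * rep.p (relRng G L (C ∩ rngW G L β) μ' ∩ D)
            rw [mul_assoc, ← mul_assoc (star (sWord rep.s β)),
              star_sWord_prefix rep hβne hμ'e, mul_assoc (rep.p (rngW G L β)),
              ← mul_assoc, pE_mul rep hCb (bbarE_rngW β), ← mul_assoc,
              p_sWord rep (bbarE_inter hCb (bbarE_rngW β)) hμ'e, mul_assoc,
              pE_mul rep (bbarE_relRng (bbarE_inter hCb (bbarE_rngW β)) μ') hDb]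
          rw [elt_of_midL (fun u hu => (good_of_mem hoα u hu).1) hμ'e hmid]
          exact elt_good_mem hbound (good_owAppend (good_of_mem hoα) hμ'e hμ'W.2.1)
            (cs_inter
              (cs_relRng sa h𝒞₀ h𝒜₀f h𝒞₀f hbound (cs_inter hC (cs_rngW hβ)) hμ'W) hD)
            (good_of_mem hoν)
      · by_cases hpre2 : μ <+: β
        · obtain ⟨β', rfl⟩ := hpre2
          have hβ'e : β' ≠ [] := by
            rintro rfl
            exact hpre (by simp)
          have hβ'W : β' ∈ Words 𝒜₀ m0 := by
            refine ⟨hβ'e, fun a ha => hβ.2.1 a (List.mem_append_right _ ha), ?_⟩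
            have h := hβ.2.2
            rw [List.length_append] at h
            omega
          have hswap : star (sWord rep.s (μ ++ β')) * sWord rep.s μ =
              star (sWord rep.s β') * rep.p (rngW G L μ) := by
            have h := congrArg star (star_sWord_prefix rep hμne hβ'e)
            rw [star_mul, star_star, star_mul, pE_sa rep (bbarE_rngW μ)] at h
            exact h
          have hmid : eltR rep (some (μ ++ β')) (rep.p C) *
              eltL rep (some μ) (rep.p D) =
              eltR rep (some β') (rep.p (C ∩ relRng G L (rngW G L μ ∩ D) β')) := by
            show rep.p C * star (sWord rep.s (μ ++ β')) * (sWord rep.s μ * rep.p D) =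
              rep.p (C ∩ relRng G L (rngW G L μ ∩ D) β') * star (sWord rep.s β')
            rw [mul_assoc, ← mul_assoc (star (sWord rep.s (μ ++ β'))), hswap,
              mul_assoc (star (sWord rep.s β')), pE_mul rep (bbarE_rngW μ) hDb,
              star_sWord_p rep (bbarE_inter (bbarE_rngW μ) hDb) hβ'e, ← mul_assoc,
              pE_mul rep hCb (bbarE_relRng (bbarE_inter (bbarE_rngW μ) hDb) β')]
          rw [elt_of_midR (fun u hu => (good_of_mem hoν u hu).1) hβ'e hmid]
          exact elt_good_mem hbound (good_of_mem hoα)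
            (cs_inter hC
              (cs_relRng sa h𝒞₀ h𝒜₀f h𝒞₀f hbound (cs_inter (cs_rngW hμ) hD) hβ'W))
            (good_owAppend (good_of_mem hoν) hβ'e hβ'W.2.1)
        · have hmid : eltR rep (some β) (rep.p C) * eltL rep (some μ) (rep.p D) = 0 := by
            show rep.p C * star (sWord rep.s β) * (sWord rep.s μ * rep.p D) = 0
            rw [mul_assoc, ← mul_assoc (star (sWord rep.s β)),
              star_sWord_orth rep hβne hμne hpre hpre2, zero_mul, mul_zero]
          rw [hmid, eltR_zero, eltL_zero]
          exact Set.mem_insert _ _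

/-! ### Generators and the adjoin -/

variable (rep : LRep G L B) in
def gensSet : Set B :=
  {x : B | ∃ a : 𝒜, x = rep.s a} ∪ {x : B | ∃ A : Set V, Bbar G L A ∧ x = rep.p A}

lemma s_eq_elt (a : 𝒜) : rep.s a = rep.elt (some [a]) (rngW G L [a]) none := by
  show rep.s a = sWord rep.s [a] * rep.p (rngW G L [a])
  rw [show sWord rep.s [a] = rep.s a from rfl, ← rep.s_s a, ← mul_assoc, rep.s_pi a]

lemma s_mem_TS (hm0 : 1 ≤ m0) {a : 𝒜} (ha : a ∈ 𝒜₀) :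
    rep.s a ∈ TS rep 𝒜₀ 𝒞₀ m0 := by
  have haW : [a] ∈ Words 𝒜₀ m0 := ⟨by simp, by simpa using ha, by simpa using hm0⟩
  rw [s_eq_elt (rep := rep) a]
  exact mem_TS (Set.mem_insert_of_mem _ ⟨[a], haW, rfl⟩) (cs_rngW haW)
    (Set.mem_insert _ _)

lemma p_mem_TS {A : Set V} (hA : A ∈ 𝒞₀) : rep.p A ∈ TS rep 𝒜₀ 𝒞₀ m0 := by
  show rep.elt none A none ∈ TS rep 𝒜₀ 𝒞₀ m0
  exact mem_TS (Set.mem_insert _ _) (cs_bs (Or.inl hA)) (Set.mem_insert _ _)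

lemma sWord_mem_adjoin (w : List 𝒜) :
    sWord rep.s w ∈ NonUnitalStarAlgebra.adjoin ℂ (gensSet rep) := by
  induction w with
  | nil => exact zero_mem _
  | cons a w' ih =>
    by_cases h : w' = []
    · subst h
      exact NonUnitalStarAlgebra.subset_adjoin ℂ _ (Or.inl ⟨a, rfl⟩)
    · rw [sWord_cons rep a h]
      exact mul_mem (NonUnitalStarAlgebra.subset_adjoin ℂ _ (Or.inl ⟨a, rfl⟩)) ih

lemma pE_mem_adjoin {A : Set V} (hA : BbarE G L A) :
    rep.p A ∈ NonUnitalStarAlgebra.adjoin ℂ (gensSet rep) := by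
  rcases hA with hA | rfl
  · exact NonUnitalStarAlgebra.subset_adjoin ℂ _ (Or.inr ⟨A, hA, rfl⟩)
  · rw [rep.p_empty]; exact zero_mem _

lemma elt_mem_adjoin {C : Set V} (hC : BbarE G L C) (oα oβ : Option (List 𝒜)) :
    rep.elt oα C oβ ∈ NonUnitalStarAlgebra.adjoin ℂ (gensSet rep) := by
  match oα, oβ with
  | none, none => exact pE_mem_adjoin hC
  | some α, none => exact mul_mem (sWord_mem_adjoin α) (pE_mem_adjoin hC)
  | none, some β => exact mul_mem (pE_mem_adjoin hC) (star_mem (sWord_mem_adjoin β))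
  | some α, some β =>
    exact mul_mem (mul_mem (sWord_mem_adjoin α) (pE_mem_adjoin hC))
      (star_mem (sWord_mem_adjoin β))

lemma ts_mem_adjoin (h𝒞₀ : ∀ A ∈ 𝒞₀, Bbar G L A) (h𝒜₀f : 𝒜₀.Finite)
    (h𝒞₀f : 𝒞₀.Finite) {x : B} (hx : x ∈ TS rep 𝒜₀ 𝒞₀ m0) :
    x ∈ NonUnitalStarAlgebra.adjoin ℂ (gensSet rep) := by
  obtain ⟨⟨oα, C, oβ⟩, ⟨_, h2, _⟩, rfl⟩ := hx
  exact elt_mem_adjoin (cs_bbarE h𝒞₀ h𝒜₀f h𝒞₀f h2) oα oβ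

end TSpan

/-! ### The main finite-dimensional subalgebra -/

lemma main {B : Type*} [NonUnitalCStarAlgebra B] (rep : LRep G L B)
    (hL : Function.Surjective L) (sa : StandingAssumptions G L)
    (hCondA : CondA G L)
    (𝒜₀ : Set 𝒜) (h𝒜₀f : 𝒜₀.Finite) (𝒞₀ : Set (Set V)) (h𝒞₀f : 𝒞₀.Finite)
    (h𝒞₀ : ∀ A ∈ 𝒞₀, Bbar G L A) :
    ∃ D : NonUnitalStarSubalgebra ℂ B, FiniteDimensional ℂ D ∧
      (D : Set B) ⊆ ↑(NonUnitalStarAlgebra.adjoin ℂ (gensSet rep)) ∧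
      (∀ a ∈ 𝒜₀, rep.s a ∈ D) ∧ (∀ A ∈ 𝒞₀, rep.p A ∈ D) := by
  obtain ⟨m0, hm0, hpb⟩ := exists_bound hL hCondA 𝒜₀ h𝒜₀f
  have hbound : ∀ w : List 𝒜, (∀ a ∈ w, a ∈ 𝒜₀) → IsLabelWord G L w →
      w.length ≤ m0 := by
    rintro w hw ⟨p, hp⟩
    have h := hpb p (by rw [hp]; exact hw)
    rw [← hp, label_length]
    exact h
  set T := TS rep 𝒜₀ 𝒞₀ m0 with hT
  have hTfin : T.Finite := ts_finite h𝒜₀f h𝒞₀f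
  set M := Submodule.span ℂ T with hM
  have hTM : T ⊆ (M : Set B) := Submodule.subset_span
  have hins : insert (0 : B) T ⊆ (M : Set B) := by
    rintro x (rfl | hx)
    exacts [M.zero_mem, hTM hx]
  have hmul : ∀ x y : B, x ∈ M → y ∈ M → x * y ∈ M := by
    intro x y hx hy
    have key : ∀ x ∈ T, ∀ y ∈ M, x * y ∈ M := by
      intro x hxT y hy
      induction hy using Submodule.span_induction with
      | mem z hz => exact hins (mul_TS sa h𝒞₀ h𝒜₀f h𝒞₀f hbound hxT hz)
      | zero => rw [mul_zero]; exact M.zero_mem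
      | add a b _ _ ha hb => rw [mul_add]; exact M.add_mem ha hb
      | smul c a _ ha => rw [mul_smul_comm]; exact M.smul_mem c ha
    induction hx using Submodule.span_induction with
    | mem z hz => exact key z hz y hy
    | zero => rw [zero_mul]; exact M.zero_mem
    | add a b _ _ ha hb => rw [add_mul]; exact M.add_mem ha hb
    | smul c a _ ha => rw [smul_mul_assoc]; exact M.smul_mem c ha
  have hstar : ∀ x ∈ M, star x ∈ M := by
    intro x hx
    induction hx using Submodule.span_induction with
    | mem z hz => exact hTM (star_TS h𝒞₀ h𝒜₀f h𝒞₀f hz)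
    | zero => rw [star_zero]; exact M.zero_mem
    | add a b _ _ ha hb => rw [star_add]; exact M.add_mem ha hb
    | smul c a _ ha => rw [star_smul]; exact M.smul_mem _ ha
  refine ⟨{ toNonUnitalSubalgebra := M.toNonUnitalSubalgebra hmul,
            star_mem' := fun hx => hstar _ hx }, ?_, ?_, ?_, ?_⟩
  · exact FiniteDimensional.span_of_finite ℂ hTfin
  · intro x hx
    have hx' : x ∈ M := hx
    clear hx
    induction hx' using Submodule.span_induction with
    | mem z hz => exact ts_mem_adjoin h𝒞₀ h𝒜₀f h𝒞₀f hz
    | zero => exact zero_mem _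
    | add a b _ _ ha hb => exact add_mem ha hb
    | smul c a _ ha => exact SMulMemClass.smul_mem c ha
  · intro a ha
    exact hTM (s_mem_TS hm0 ha)
  · intro A hA
    exact hTM (p_mem_TS hA)

end AFAux


/-- Theorem 4.4. If `(E, L, 𝔅̄)` satisfies condition (a),
then for every representation `{s_a, p_A}` in a C*-algebra, the C*-subalgebra
generated by `{s_a : a ∈ 𝒜} ∪ {p_A : A ∈ 𝔅̄}` is an AF algebra: every finite
subset of it can be approximated within any `ε > 0` from a finite-dimensional
C*-subalgebra of it. -/
theorem condA_implies_AF {V E 𝒜 B : Type*}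
    [Countable V] [Countable E] [Countable 𝒜]
    [NonUnitalCStarAlgebra B]
    (G : DirGraph V E) (L : E → 𝒜) (hL : Function.Surjective L)
    (sa : StandingAssumptions G L)
    (hCondA : CondA G L)
    (rep : LRep G L B)
    (S : Set B)
    (hS : S = closure (NonUnitalStarAlgebra.adjoin ℂ
      ({x : B | ∃ a : 𝒜, x = rep.s a} ∪
        {x : B | ∃ A : Set V, Bbar G L A ∧ x = rep.p A}) : Set B)) :
    ∀ F : Finset B, (∀ x ∈ F, x ∈ S) → ∀ ε : ℝ, 0 < ε →
      ∃ D : NonUnitalStarSubalgebra ℂ B, (D : Set B) ⊆ S ∧ FiniteDimensional ℂ D ∧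
        ∀ x ∈ F, ∃ y ∈ (D : Set B), ‖x - y‖ < ε := by
  classical
  intro F hF ε hε
  have happrox : ∀ x : B, x ∈ F → ∃ y, y ∈ (NonUnitalStarAlgebra.adjoin ℂ
      (AFAux.gensSet rep) : Set B) ∧ ‖x - y‖ < ε := by
    intro x hx
    have hxS : x ∈ closure (NonUnitalStarAlgebra.adjoin ℂ
        (AFAux.gensSet rep) : Set B) := by
      have h := hF x hx
      rw [hS] at h
      exact h
    rw [Metric.mem_closure_iff] at hxS
    obtain ⟨y, hy, hd⟩ := hxS ε hε
    exact ⟨y, hy, by rwa [dist_eq_norm] at hd⟩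
  choose! g hg1 hg2 using happrox
  have hfin : ∀ x : B, x ∈ F → ∃ R : Set B, R.Finite ∧ R ⊆ AFAux.gensSet rep ∧
      g x ∈ NonUnitalStarAlgebra.adjoin ℂ R := by
    intro x hx
    refine NonUnitalStarAlgebra.adjoin_induction (R := ℂ)
      (p := fun y _ => ∃ R : Set B, R.Finite ∧ R ⊆ AFAux.gensSet rep ∧
        y ∈ NonUnitalStarAlgebra.adjoin ℂ R) ?_ ?_ ?_ ?_ ?_ ?_ (hg1 x hx)
    · intro z hz
      exact ⟨{z}, Set.finite_singleton z, Set.singleton_subset_iff.2 hz,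
        NonUnitalStarAlgebra.self_mem_adjoin_singleton ℂ z⟩
    · rintro a b _ _ ⟨Ra, hRa1, hRa2, hRa3⟩ ⟨Rb, hRb1, hRb2, hRb3⟩
      refine ⟨Ra ∪ Rb, hRa1.union hRb1, Set.union_subset hRa2 hRb2, add_mem ?_ ?_⟩
      · exact NonUnitalStarAlgebra.adjoin_le
          (Set.subset_union_left.trans (NonUnitalStarAlgebra.subset_adjoin ℂ _)) hRa3
      · exact NonUnitalStarAlgebra.adjoin_le
          (Set.subset_union_right.trans (NonUnitalStarAlgebra.subset_adjoin ℂ _)) hRb3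
    · exact ⟨∅, Set.finite_empty, Set.empty_subset _, zero_mem _⟩
    · rintro a b _ _ ⟨Ra, hRa1, hRa2, hRa3⟩ ⟨Rb, hRb1, hRb2, hRb3⟩
      refine ⟨Ra ∪ Rb, hRa1.union hRb1, Set.union_subset hRa2 hRb2, mul_mem ?_ ?_⟩
      · exact NonUnitalStarAlgebra.adjoin_le
          (Set.subset_union_left.trans (NonUnitalStarAlgebra.subset_adjoin ℂ _)) hRa3
      · exact NonUnitalStarAlgebra.adjoin_le
          (Set.subset_union_right.trans (NonUnitalStarAlgebra.subset_adjoin ℂ _)) hRb3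
    · rintro c a _ ⟨Ra, hRa1, hRa2, hRa3⟩
      exact ⟨Ra, hRa1, hRa2, SMulMemClass.smul_mem c hRa3⟩
    · rintro a _ ⟨Ra, hRa1, hRa2, hRa3⟩
      exact ⟨Ra, hRa1, hRa2, star_mem hRa3⟩
  choose! R hR1 hR2 hR3 using hfin
  set R₀ : Set B := ⋃ x ∈ (F : Set B), R x with hR₀
  have hR₀fin : R₀.Finite :=
    F.finite_toSet.biUnion fun x hx => hR1 x (Finset.mem_coe.mp hx)
  have hR₀sub : R₀ ⊆ AFAux.gensSet rep :=
    Set.iUnion₂_subset fun x hx => hR2 x (Finset.mem_coe.mp hx)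
  set 𝒜₀ : Set 𝒜 := ⋃ x ∈ R₀,
    (if h : ∃ a : 𝒜, x = rep.s a then {h.choose} else ∅) with h𝒜₀
  set 𝒞₀ : Set (Set V) := ⋃ x ∈ R₀,
    (if h : ∃ A : Set V, Bbar G L A ∧ x = rep.p A then {h.choose} else ∅) with h𝒞₀
  have h𝒜₀f : 𝒜₀.Finite := hR₀fin.biUnion fun x _ => by split <;> simp
  have h𝒞₀f : 𝒞₀.Finite := hR₀fin.biUnion fun x _ => by split <;> simp
  have h𝒞₀bar : ∀ A ∈ 𝒞₀, Bbar G L A := by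
    intro A hA
    simp only [h𝒞₀, Set.mem_iUnion] at hA
    obtain ⟨x, hx, hA⟩ := hA
    by_cases h : ∃ A' : Set V, Bbar G L A' ∧ x = rep.p A'
    · rw [dif_pos h, Set.mem_singleton_iff] at hA
      subst hA
      exact h.choose_spec.1
    · rw [dif_neg h] at hA
      exact absurd hA (Set.notMem_empty A)
  obtain ⟨D, hDfd, hDadj, hDs, hDp⟩ :=
    AFAux.main rep hL sa hCondA 𝒜₀ h𝒜₀f 𝒞₀ h𝒞₀f h𝒞₀bar
  have hcover : R₀ ⊆ (D : Set B) := by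
    intro x hx
    rcases hR₀sub hx with ⟨a, rfl⟩ | ⟨A, hA, rfl⟩
    · have h : ∃ a' : 𝒜, rep.s a = rep.s a' := ⟨a, rfl⟩
      have hmem : h.choose ∈ 𝒜₀ := by
        simp only [h𝒜₀, Set.mem_iUnion]
        exact ⟨rep.s a, hx, by rw [dif_pos h]; exact Set.mem_singleton _⟩
      have hd := hDs h.choose hmem
      exact h.choose_spec ▸ hd
    · have h : ∃ A' : Set V, Bbar G L A' ∧ rep.p A = rep.p A' := ⟨A, hA, rfl⟩
      have hmem : h.choose ∈ 𝒞₀ := by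
        simp only [h𝒞₀, Set.mem_iUnion]
        exact ⟨rep.p A, hx, by rw [dif_pos h]; exact Set.mem_singleton _⟩
      have hd := hDp h.choose hmem
      exact h.choose_spec.2 ▸ hd
  refine ⟨D, ?_, hDfd, ?_⟩
  · rw [hS]
    exact hDadj.trans subset_closure
  · intro x hx
    refine ⟨g x, ?_, hg2 x hx⟩
    have hsub : R x ⊆ (D : Set B) := fun y hy =>
      hcover (Set.mem_biUnion (Finset.mem_coe.mpr hx) hy)
    exact NonUnitalStarAlgebra.adjoin_le hsub (hR3 x hx)


end
end

section
/- Suppose the labeled graph (E,L) has no sinks or sources. Let {s_a, p_A} be a representation of (E,L,𝔅̄) in a C*-algebra B generated by {s_a} ∪ {p_A}, with p_C ≠ 0 for every nonempty C ∈ 𝔅̄ and admitting a gauge action. Then for A, B' ∈ 𝔅̄, the projection p_A belongs to the closed two-sided ideal I_{B'} of B generated by p_{B'} if and only if there exist N ≥ 1 and finitely many μ_1,…,μ_n ∈ L(B'E^{≥0}) (each μ_i either a labeled path of a path with source in B', or the empty word, with r(B',empty word) = B') such that ∪_{β∈L(AE^N)} r(A,β) ⊆ ∪_{i=1}^n r(B',μ_i).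 -/
/-! # Common framework for labeled graph C*-algebras

Directed graphs, finite paths, labeled spaces `(E, L, 𝔅̄)` where `𝔅̄` is the
smallest accommodating set closed under relative complements (and containing
the sink parts of its members), loops and generalized loops, representations
of labeled spaces in C*-algebras, gauge actions, infinite projections,
AF algebras, and closed two-sided ideals. -/

noncomputable section

variable {V E 𝒜 : Type*}

/-! ### Auxiliary development for Lemma 4.7 -/

section Aux47

variable {V E 𝒜 : Type*} {G : DirGraph V E} {L : E → 𝒜}

namespace GPath

/-- The single-edge path. -/
def single (G : DirGraph V E) (e : E) : GPath G :=
  ⟨[e], by simp, List.isChain_singleton e⟩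

@[simp] lemma single_source (e : E) : (single G e).source = G.src e := rfl
@[simp] lemma single_range (e : E) : (single G e).range = G.rng e := rfl
@[simp] lemma single_label (e : E) : (single G e).label L = [L e] := rfl
@[simp] lemma single_length (e : E) : (single G e).length = 1 := rfl

/-- Prepending a composable edge to a path. -/
def cons (e : E) (q : GPath G) (h : G.rng e = q.source) : GPath G where
  edges := e :: q.edges
  ne := by simp
  chain := by
    show List.IsChain _ (e :: q.edges)
    rw [List.isChain_cons]
    refine ⟨fun y hy => ?_, q.chain⟩
    rw [List.head?_eq_head q.ne] at hy
    obtain rfl : q.edges.head q.ne = y := by simpa using hy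
    exact h

@[simp] lemma cons_source (e : E) (q : GPath G) (h : G.rng e = q.source) :
    (cons e q h).source = G.src e := rfl

@[simp] lemma cons_range (e : E) (q : GPath G) (h : G.rng e = q.source) :
    (cons e q h).range = q.range := by
  simp only [range, cons]
  exact congrArg G.rng (List.getLast_cons q.ne)

@[simp] lemma cons_label (e : E) (q : GPath G) (h : G.rng e = q.source) :
    (cons e q h).label L = L e :: q.label L := rfl

@[simp] lemma cons_length (e : E) (q : GPath G) (h : G.rng e = q.source) :
    (cons e q h).length = q.length + 1 := by
  simp [length, cons]

/-- The tail of a path (of length at least two). -/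
def tl (p : GPath G) (h : p.edges.tail ≠ []) : GPath G :=
  ⟨p.edges.tail, h, p.chain.tail⟩

lemma tl_source (p : GPath G) (h : p.edges.tail ≠ []) :
    (p.tl h).source = G.rng (p.edges.head p.ne) := by
  rcases p with ⟨l, hne, hch⟩
  cases l with
  | nil => exact absurd rfl hne
  | cons e t =>
    cases t with
    | nil => exact absurd rfl h
    | cons f t' =>
      have := (List.isChain_cons_cons.mp hch).1
      simpa [tl, source] using this.symm

lemma tl_range (p : GPath G) (h : p.edges.tail ≠ []) :
    (p.tl h).range = p.range := by
  rcases p with ⟨l, hne, hch⟩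
  cases l with
  | nil => exact absurd rfl hne
  | cons e t =>
    cases t with
    | nil => exact absurd rfl h
    | cons f t' =>
      simp only [tl, range]
      exact congrArg G.rng (List.getLast_cons (show f :: t' ≠ [] by simp)).symm

lemma tl_label (p : GPath G) (h : p.edges.tail ≠ []) :
    (p.tl h).label L = (p.label L).tail := by
  rcases p with ⟨l, hne, hch⟩
  cases l with
  | nil => exact absurd rfl hne
  | cons e t => simp [tl, label]

lemma tl_length (p : GPath G) (h : p.edges.tail ≠ []) :
    (p.tl h).length = p.length - 1 := by
  simp [tl, length]

lemma label_length (p : GPath G) : (p.label L).length = p.length := by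
  simp [label, length]

lemma label_ne_nil (p : GPath G) : p.label L ≠ [] := by
  simp only [label, ne_eq, List.map_eq_nil_iff]
  exact p.ne

lemma label_eq_cons (p : GPath G) (h : p.edges.tail ≠ []) :
    p.label L = L (p.edges.head p.ne) :: (p.tl h).label L := by
  conv_lhs => rw [label, ← List.cons_head_tail p.ne]
  rfl

lemma length_pos (p : GPath G) : 0 < p.length :=
  List.length_pos_iff.mpr p.ne

end GPath

lemma relRng_nil (A : Set V) : relRng G L A ([] : List 𝒜) = ∅ := by
  ext v
  simp only [relRng, Set.mem_setOf_eq, Set.mem_empty_iff_false, iff_false]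
  rintro ⟨p, hlab, -, -⟩
  exact p.label_ne_nil hlab

lemma rngW_eq_relRng_univ (w : List 𝒜) : rngW G L w = relRng G L Set.univ w := by
  ext v
  constructor
  · rintro ⟨p, h1, h2⟩
    exact ⟨p, h1, trivial, h2⟩
  · rintro ⟨p, h1, -, h3⟩
    exact ⟨p, h1, h3⟩

lemma relRng_mono {A A' : Set V} (h : A ⊆ A') (w : List 𝒜) :
    relRng G L A w ⊆ relRng G L A' w := by
  rintro v ⟨p, h1, h2, h3⟩
  exact ⟨p, h1, h h2, h3⟩

lemma relRng_subset_rngW (A : Set V) (w : List 𝒜) :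
    relRng G L A w ⊆ rngW G L w := by
  rw [rngW_eq_relRng_univ]
  exact relRng_mono (Set.subset_univ A) w

lemma relRng_iUnion {ι : Sort*} (f : ι → Set V) (w : List 𝒜) :
    relRng G L (⋃ i, f i) w = ⋃ i, relRng G L (f i) w := by
  ext v
  constructor
  · rintro ⟨p, h1, h2, h3⟩
    obtain ⟨i, hi⟩ := Set.mem_iUnion.mp h2
    exact Set.mem_iUnion.mpr ⟨i, p, h1, hi, h3⟩
  · intro hv
    obtain ⟨i, p, h1, h2, h3⟩ := Set.mem_iUnion.mp hv
    exact ⟨p, h1, Set.mem_iUnion.mpr ⟨i, h2⟩, h3⟩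

lemma relRng_cons (A : Set V) (a : 𝒜) {w : List 𝒜} (hw : w ≠ []) :
    relRng G L A (a :: w) = relRng G L (relRng G L A [a]) w := by
  ext v
  constructor
  · rintro ⟨p, hlab, hsrc, hrng⟩
    have hlen : p.edges.length = w.length + 1 := by
      have := congrArg List.length hlab
      simpa [GPath.label] using this
    have hne : p.edges.tail ≠ [] := by
      have : p.edges.tail.length = w.length := by simp [hlen]
      intro hcontr
      rw [hcontr] at this
      exact hw (List.eq_nil_of_length_eq_zero this.symm)
    have hhead : L (p.edges.head p.ne) = a := by
      have := p.label_eq_cons (L := L) hne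
      rw [hlab] at this
      exact (List.cons.injEq _ _ _ _ ▸ this).1.symm
    refine ⟨p.tl hne, ?_, ⟨GPath.single G (p.edges.head p.ne), ?_, ?_, ?_⟩, ?_⟩
    · have := p.label_eq_cons (L := L) hne
      rw [hlab] at this
      exact ((List.cons.injEq _ _ _ _ ▸ this).2).symm
    · simp [hhead]
    · simpa [GPath.source, GPath.single] using hsrc
    · rw [GPath.single_range, ← GPath.tl_source p hne]
    · rw [GPath.tl_range p hne]; exact hrng
  · rintro ⟨q, hqlab, ⟨p1, hp1lab, hp1src, hp1rng⟩, hqrng⟩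
    obtain ⟨e, he⟩ : ∃ e, p1.edges = [e] := by
      apply List.length_eq_one_iff.mp
      have := congrArg List.length hp1lab
      simpa [GPath.label] using this
    have hLe : L e = a := by
      have := hp1lab
      rw [GPath.label, he] at this
      simpa using this
    have hcomp : G.rng e = q.source := by
      have : p1.range = G.rng e := by simp [GPath.range, he]
      rw [← this]; exact hp1rng
    refine ⟨GPath.cons e q hcomp, ?_, ?_, ?_⟩
    · rw [GPath.cons_label, hLe, hqlab]
    · have : p1.source = G.src e := by simp [GPath.source, he]
      simpa [GPath.cons_source, ← this] using hp1src
    · rw [GPath.cons_range]; exact hqrng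

lemma relRng_append (A : Set V) {u v : List 𝒜} (hu : u ≠ []) (hv : v ≠ []) :
    relRng G L A (u ++ v) = relRng G L (relRng G L A u) v := by
  induction u generalizing A with
  | nil => exact absurd rfl hu
  | cons a u' ih =>
    cases u' with
    | nil => simpa using relRng_cons A a hv
    | cons b u'' =>
      have h1 : (b :: u'') ≠ [] := by simp
      have h2 : (b :: u'') ++ v ≠ [] := by simp
      rw [List.cons_append, relRng_cons A a h2, ih _ h1, relRng_cons A a h1]

lemma rngW_cons (a : 𝒜) {w : List 𝒜} (hw : w ≠ []) :
    rngW G L (a :: w) = relRng G L (rngW G L [a]) w := by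
  rw [rngW_eq_relRng_univ, relRng_cons _ a hw, rngW_eq_relRng_univ]

lemma rngW_append {u v : List 𝒜} (hu : u ≠ []) (hv : v ≠ []) :
    rngW G L (u ++ v) = relRng G L (rngW G L u) v := by
  rw [rngW_eq_relRng_univ, relRng_append _ hu hv, rngW_eq_relRng_univ]

lemma isLabelWord_singleton (hL : Function.Surjective L) (a : 𝒜) :
    IsLabelWord G L [a] := by
  obtain ⟨e, he⟩ := hL a
  exact ⟨GPath.single G e, by simp [he]⟩

lemma Bbar_relRng (hL : Function.Surjective L) {A : Set V} (hA : Bbar G L A) :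
    ∀ {w : List 𝒜}, w ≠ [] → Bbar G L (relRng G L A w) := by
  intro w
  induction w generalizing A with
  | nil => intro h; exact absurd rfl h
  | cons a w' ih =>
    intro _
    cases w' with
    | nil => exact Bbar.rel A [a] hA (isLabelWord_singleton hL a)
    | cons b w'' =>
      rw [relRng_cons A a (by simp)]
      exact ih (Bbar.rel A [a] hA (isLabelWord_singleton hL a)) (by simp)

lemma Bbar_rngW (hL : Function.Surjective L) {w : List 𝒜} (hw : w ≠ []) :
    Bbar G L (rngW G L w) := by
  cases w with
  | nil => exact absurd rfl hw
  | cons a w' =>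
    cases w' with
    | nil => exact Bbar.base [a] (isLabelWord_singleton hL a)
    | cons b w'' =>
      rw [rngW_cons a (by simp)]
      exact Bbar_relRng hL (Bbar.base [a] (isLabelWord_singleton hL a)) (by simp)

lemma length_of_mem_labelsFromLen {A : Set V} {N : ℕ} {β : List 𝒜}
    (h : β ∈ labelsFromLen G L A N) : β.length = N := by
  obtain ⟨p, -, hlen, hlab⟩ := h
  rw [← hlab, p.label_length, hlen]

lemma ne_nil_of_mem_labelsFromLen {A : Set V} {N : ℕ} {β : List 𝒜} (hN : 1 ≤ N)
    (h : β ∈ labelsFromLen G L A N) : β ≠ [] := by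
  intro hcontr
  have := length_of_mem_labelsFromLen h
  rw [hcontr] at this
  simp at this
  omega

lemma labelsFromLen_one_eq (A : Set V) :
    labelsFromLen G L A 1 = (fun a => [a]) '' {a : 𝒜 | ∃ e, G.src e ∈ A ∧ L e = a} := by
  ext w
  constructor
  · rintro ⟨p, hsrc, hlen, hlab⟩
    obtain ⟨e, he⟩ : ∃ e, p.edges = [e] := List.length_eq_one_iff.mp hlen
    refine ⟨L e, ⟨e, ?_, rfl⟩, ?_⟩
    · have : p.source = G.src e := by simp [GPath.source, he]
      rwa [this] at hsrc
    · rw [← hlab, GPath.label, he]; rfl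
  · rintro ⟨a, ⟨e, hsrc, rfl⟩, rfl⟩
    exact ⟨GPath.single G e, by simpa using hsrc, rfl, rfl⟩

lemma labelsFromLen_succ_eq (A : Set V) (N : ℕ) (hN : 1 ≤ N) :
    labelsFromLen G L A (N + 1) =
      {γ | ∃ a w, γ = a :: w ∧ w ∈ labelsFromLen G L (relRng G L A [a]) N ∧
        (∃ e, G.src e ∈ A ∧ L e = a)} := by
  ext γ
  constructor
  · rintro ⟨p, hsrc, hlen, hlab⟩
    have hne : p.edges.tail ≠ [] := by
      intro hcontr
      have h1 : p.edges.length - 1 = 0 := by rw [← List.length_tail, hcontr]; rfl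
      have hlen2 : p.edges.length = N + 1 := hlen
      omega
    refine ⟨L (p.edges.head p.ne), (p.tl hne).label L, ?_, ?_, ?_⟩
    · rw [← hlab]; exact p.label_eq_cons hne
    · refine ⟨p.tl hne, ?_, ?_, rfl⟩
      · refine ⟨GPath.single G (p.edges.head p.ne), by simp, ?_, ?_⟩
        · simpa [GPath.source, GPath.single] using hsrc
        · rw [GPath.single_range, ← GPath.tl_source p hne]
      · rw [GPath.tl_length]; omega
    · exact ⟨p.edges.head p.ne, by simpa [GPath.source] using hsrc, rfl⟩
  · rintro ⟨a, w, rfl, ⟨q, hqsrc, hqlen, hqlab⟩, -⟩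
    obtain ⟨p1, hp1lab, hp1src, hp1rng⟩ := hqsrc
    obtain ⟨e, he⟩ : ∃ e, p1.edges = [e] := by
      apply List.length_eq_one_iff.mp
      have := congrArg List.length hp1lab
      simpa [GPath.label] using this
    have hLe : L e = a := by
      have := hp1lab
      rw [GPath.label, he] at this
      simpa using this
    have hcomp : G.rng e = q.source := by
      have : p1.range = G.rng e := by simp [GPath.range, he]
      rw [← this]; exact hp1rng
    refine ⟨GPath.cons e q hcomp, ?_, ?_, ?_⟩
    · have : p1.source = G.src e := by simp [GPath.source, he]
      simpa [GPath.cons_source, ← this] using hp1src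
    · rw [GPath.cons_length, hqlen]
    · rw [GPath.cons_label, hLe, hqlab]

end Aux47


section Aux47Op

variable {V E 𝒜 B : Type*} [NonUnitalCStarAlgebra B] {G : DirGraph V E} {L : E → 𝒜}
variable (rep : LRep G L B)

lemma sWord_cons (a : 𝒜) {w : List 𝒜} (hw : w ≠ []) :
    sWord rep.s (a :: w) = rep.s a * sWord rep.s w := by
  cases w with
  | nil => exact absurd rfl hw
  | cons b w' => rfl

lemma sWord_append {u v : List 𝒜} (hu : u ≠ []) (hv : v ≠ []) :
    sWord rep.s (u ++ v) = sWord rep.s u * sWord rep.s v := by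
  induction u with
  | nil => exact absurd rfl hu
  | cons a u' ih =>
    cases u' with
    | nil =>
      rw [List.singleton_append, sWord_cons rep a hv]
      rfl
    | cons b u'' =>
      rw [List.cons_append, sWord_cons rep a (by simp), sWord_cons rep a (by simp),
        ih (by simp), mul_assoc]

lemma p_mul_sWord (hL : Function.Surjective L) {A : Set V} (hA : Bbar G L A) :
    ∀ {w : List 𝒜}, w ≠ [] →
      rep.p A * sWord rep.s w = sWord rep.s w * rep.p (relRng G L A w) := by
  intro w
  induction w generalizing A with
  | nil => intro h; exact absurd rfl h
  | cons a w' ih =>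
    intro _
    cases w' with
    | nil => exact rep.p_s A a hA
    | cons b w'' =>
      have hne : (b :: w'') ≠ [] := by simp
      rw [sWord_cons rep a hne, ← mul_assoc, rep.p_s A a hA, mul_assoc,
        ih (Bbar.rel A [a] hA (isLabelWord_singleton hL a)) hne, ← mul_assoc,
        ← relRng_cons A a hne]

lemma star_sWord_mul_self (hL : Function.Surjective L) :
    ∀ {w : List 𝒜}, w ≠ [] →
      star (sWord rep.s w) * sWord rep.s w = rep.p (rngW G L w) := by
  intro w
  induction w with
  | nil => intro h; exact absurd rfl h
  | cons a w' ih =>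
    intro _
    cases w' with
    | nil => exact rep.s_s a
    | cons b w'' =>
      have hne : (b :: w'') ≠ [] := by simp
      have hBa : Bbar G L (rngW G L [a]) := Bbar.base [a] (isLabelWord_singleton hL a)
      calc star (sWord rep.s (a :: b :: w'')) * sWord rep.s (a :: b :: w'')
          = star (sWord rep.s (b :: w'')) *
              ((star (rep.s a) * rep.s a) * sWord rep.s (b :: w'')) := by
            rw [sWord_cons rep a hne, star_mul]
            simp only [mul_assoc]
        _ = star (sWord rep.s (b :: w'')) *
              (sWord rep.s (b :: w'') * rep.p (relRng G L (rngW G L [a]) (b :: w''))) := by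
            rw [rep.s_s a, p_mul_sWord rep hL hBa hne]
        _ = rep.p (rngW G L (b :: w'')) * rep.p (relRng G L (rngW G L [a]) (b :: w'')) := by
            rw [← mul_assoc, ih hne]
        _ = rep.p (rngW G L (a :: b :: w'')) := by
            rw [rep.p_mul _ _ (Bbar_rngW hL hne) (Bbar_relRng hL hBa hne),
              rngW_cons a hne]
            congr 1
            exact Set.inter_eq_self_of_subset_right (relRng_subset_rngW _ _)

lemma star_sWord_mul_of_ne (hL : Function.Surjective L) :
    ∀ {u v : List 𝒜}, u.length = v.length → u ≠ [] → u ≠ v →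
      star (sWord rep.s u) * sWord rep.s v = 0 := by
  intro u
  induction u with
  | nil => intro v _ h; exact absurd rfl h
  | cons a u' ih =>
    intro v hlen _ hne
    cases v with
    | nil => simp at hlen
    | cons b v' =>
      have hlen' : u'.length = v'.length := by simpa using hlen
      by_cases hab : a = b
      · subst hab
        have huv' : u' ≠ v' := fun h => hne (by rw [h])
        cases u' with
        | nil =>
          exact absurd (List.eq_nil_of_length_eq_zero hlen'.symm).symm huv'
        | cons c u'' =>
          have hu'ne : (c :: u'') ≠ [] := by simp
          have hv'ne : v' ≠ [] := by
            intro h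
            rw [h] at hlen'
            simp at hlen'
          have hBa : Bbar G L (rngW G L [a]) := Bbar.base [a] (isLabelWord_singleton hL a)
          calc star (sWord rep.s (a :: c :: u'')) * sWord rep.s (a :: v')
              = star (sWord rep.s (c :: u'')) *
                  ((star (rep.s a) * rep.s a) * sWord rep.s v') := by
                rw [sWord_cons rep a hu'ne, sWord_cons rep a hv'ne, star_mul]
                simp only [mul_assoc]
            _ = star (sWord rep.s (c :: u'')) *
                  (sWord rep.s v' * rep.p (relRng G L (rngW G L [a]) v')) := by
                rw [rep.s_s a, p_mul_sWord rep hL hBa hv'ne]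
            _ = 0 := by
                rw [← mul_assoc, ih hlen' hu'ne huv', zero_mul]
      · have hv'ne_or : True := trivial
        cases u' with
        | nil =>
          have : v' = [] := List.eq_nil_of_length_eq_zero hlen'.symm
          subst this
          exact rep.s_orth a b hab
        | cons c u'' =>
          have hu'ne : (c :: u'') ≠ [] := by simp
          have hv'ne : v' ≠ [] := by
            intro h
            rw [h] at hlen'
            simp at hlen'
          calc star (sWord rep.s (a :: c :: u'')) * sWord rep.s (b :: v')
              = star (sWord rep.s (c :: u'')) *
                  ((star (rep.s a) * rep.s b) * sWord rep.s v') := by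
                rw [sWord_cons rep a hu'ne, sWord_cons rep b hv'ne, star_mul]
                simp only [mul_assoc]
            _ = 0 := by rw [rep.s_orth a b hab, zero_mul, mul_zero]

lemma star_sWord_mul_append (hL : Function.Surjective L) {u v : List 𝒜}
    (hu : u ≠ []) (hv : v ≠ []) :
    star (sWord rep.s u) * sWord rep.s (u ++ v) =
      sWord rep.s v * rep.p (rngW G L (u ++ v)) := by
  rw [sWord_append rep hu hv, ← mul_assoc, star_sWord_mul_self rep hL hu,
    p_mul_sWord rep hL (Bbar_rngW hL hu) hv, ← rngW_append hu hv]

lemma star_sWord_append_mul (hL : Function.Surjective L) {u v : List 𝒜}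
    (hu : u ≠ []) (hv : v ≠ []) :
    star (sWord rep.s (u ++ v)) * sWord rep.s u =
      rep.p (rngW G L (u ++ v)) * star (sWord rep.s v) := by
  have huv : u ++ v ≠ [] := by simp [hu]
  have h := congrArg star (star_sWord_mul_append rep hL hu hv)
  rw [star_mul, star_star, star_mul, rep.p_sa _ (Bbar_rngW hL huv)] at h
  exact h

lemma s_mul_p_rngW (a : 𝒜) : rep.s a * rep.p (rngW G L [a]) = rep.s a := by
  have h := rep.s_pi a
  rw [mul_assoc, rep.s_s a] at h
  exact h

lemma norm_p_mul_self (hA : Bbar G L A) : rep.p A * rep.p A = rep.p A := by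
  rw [rep.p_mul A A hA hA, Set.inter_self]

lemma norm_p_eq_sq {A : Set V} (hA : Bbar G L A) :
    ‖rep.p A‖ * ‖rep.p A‖ = ‖rep.p A‖ := by
  calc ‖rep.p A‖ * ‖rep.p A‖ = ‖star (rep.p A) * rep.p A‖ :=
        (CStarRing.norm_star_mul_self).symm
    _ = ‖rep.p A‖ := by
        rw [rep.p_sa A hA, rep.p_mul A A hA hA, Set.inter_self]

lemma norm_p_le_one {A : Set V} (hA : Bbar G L A) : ‖rep.p A‖ ≤ 1 := by
  nlinarith [norm_p_eq_sq rep hA, norm_nonneg (rep.p A)]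

lemma p_eq_zero_of_norm_lt_one {A : Set V} (hA : Bbar G L A)
    (h : ‖rep.p A‖ < 1) : rep.p A = 0 := by
  have h1 := norm_p_eq_sq rep hA
  have h2 : ‖rep.p A‖ = 0 := by nlinarith [norm_nonneg (rep.p A)]
  exact norm_eq_zero.mp h2

lemma norm_s_le_one (hL : Function.Surjective L) (a : 𝒜) : ‖rep.s a‖ ≤ 1 := by
  have h3 : ‖rep.s a‖ * ‖rep.s a‖ = ‖star (rep.s a) * rep.s a‖ :=
    (CStarRing.norm_star_mul_self).symm
  rw [rep.s_s a] at h3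
  have h4 := norm_p_le_one rep (Bbar.base [a] (isLabelWord_singleton hL a))
  nlinarith [norm_nonneg (rep.s a)]

lemma norm_sWord_le_one (hL : Function.Surjective L) :
    ∀ {w : List 𝒜}, w ≠ [] → ‖sWord rep.s w‖ ≤ 1 := by
  intro w
  induction w with
  | nil => intro h; exact absurd rfl h
  | cons a w' ih =>
    intro _
    cases w' with
    | nil => exact norm_s_le_one rep hL a
    | cons b w'' =>
      rw [sWord_cons rep a (by simp)]
      calc ‖rep.s a * sWord rep.s (b :: w'')‖
          ≤ ‖rep.s a‖ * ‖sWord rep.s (b :: w'')‖ := norm_mul_le _ _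
        _ ≤ 1 := mul_le_one₀ (norm_s_le_one rep hL a) (norm_nonneg _)
            (ih (by simp))

lemma ck_one (hL : Function.Surjective L) (sa : StandingAssumptions G L)
    (hnosink : G.sinks = ∅) {A : Set V} (hA : Bbar G L A) :
    rep.p A = ∑ β ∈ (sa.setFinite A hA 1 le_rfl).toFinset,
      sWord rep.s β * rep.p (relRng G L A β) * star (sWord rep.s β) := by
  have hck := rep.ck A hA
  rw [hnosink, Set.inter_empty, rep.p_empty, add_zero] at hck
  have hSAfin : {a : 𝒜 | ∃ e, G.src e ∈ A ∧ L e = a}.Finite := by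
    have himg := sa.setFinite A hA 1 le_rfl
    rw [labelsFromLen_one_eq] at himg
    exact Set.Finite.of_finite_image himg
      (Set.injOn_of_injective (fun a b h => by simpa using h))
  rw [finsum_mem_eq_finite_toFinset_sum _ hSAfin] at hck
  rw [hck]
  refine Finset.sum_bij (fun a _ => [a]) ?_ ?_ ?_ ?_
  · intro a ha
    rw [Set.Finite.mem_toFinset] at ha ⊢
    rw [labelsFromLen_one_eq]
    exact ⟨a, ha, rfl⟩
  · intro a _ b _ h
    simpa using h
  · intro β hβ
    rw [Set.Finite.mem_toFinset, labelsFromLen_one_eq] at hβ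
    obtain ⟨a, ha, rfl⟩ := hβ
    exact ⟨a, Set.Finite.mem_toFinset hSAfin |>.mpr ha, rfl⟩
  · intro a _
    rfl

lemma ckN (hL : Function.Surjective L) (sa : StandingAssumptions G L)
    (hnosink : G.sinks = ∅) {N : ℕ} (hN : 1 ≤ N) {A : Set V} (hA : Bbar G L A) :
    rep.p A = ∑ β ∈ (sa.setFinite A hA N hN).toFinset,
      sWord rep.s β * rep.p (relRng G L A β) * star (sWord rep.s β) := by
  induction N, hN using Nat.le_induction generalizing A with
  | base => exact ck_one rep hL sa hnosink hA
  | succ N hN ih =>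
    classical
    set f : List 𝒜 → Finset (List 𝒜) := fun w =>
      if h : (labelsFromLen G L (relRng G L A w) N).Finite then h.toFinset else ∅
      with hf
    calc rep.p A = ∑ w ∈ (sa.setFinite A hA 1 le_rfl).toFinset,
        sWord rep.s w * rep.p (relRng G L A w) * star (sWord rep.s w) :=
          ck_one rep hL sa hnosink hA
      _ = ∑ w ∈ (sa.setFinite A hA 1 le_rfl).toFinset, ∑ u ∈ f w,
            sWord rep.s (w ++ u) * rep.p (relRng G L A (w ++ u)) *
              star (sWord rep.s (w ++ u)) := by
          apply Finset.sum_congr rfl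
          intro w hw
          have hwmem := (Set.Finite.mem_toFinset _).mp hw
          have hwne : w ≠ [] := ne_nil_of_mem_labelsFromLen le_rfl hwmem
          have hfin : (labelsFromLen G L (relRng G L A w) N).Finite :=
            sa.setFinite _ (Bbar_relRng hL hA hwne) N hN
          have hfe : f w = (sa.setFinite (relRng G L A w)
              (Bbar_relRng hL hA hwne) N hN).toFinset := by
            rw [hf]; exact dif_pos hfin
          rw [ih (Bbar_relRng hL hA hwne), ← hfe, Finset.mul_sum, Finset.sum_mul]
          apply Finset.sum_congr rfl
          intro u hu
          have hu' : u ∈ labelsFromLen G L (relRng G L A w) N := by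
            rw [hfe] at hu
            exact (Set.Finite.mem_toFinset _).mp hu
          have hune : u ≠ [] := ne_nil_of_mem_labelsFromLen hN hu'
          rw [sWord_append rep hwne hune, relRng_append A hwne hune, star_mul]
          simp only [mul_assoc]
      _ = ∑ γ ∈ (sa.setFinite A hA (N + 1) (by omega)).toFinset,
          sWord rep.s γ * rep.p (relRng G L A γ) * star (sWord rep.s γ) := by
          rw [Finset.sum_sigma']
          refine Finset.sum_bij (fun x _ => x.1 ++ x.2) ?_ ?_ ?_ ?_
          · rintro ⟨w, u⟩ hx
            have hx1 := (Finset.mem_sigma.mp hx).1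
            have hx2 := (Finset.mem_sigma.mp hx).2
            rw [Set.Finite.mem_toFinset] at hx1
            have hwne : w ≠ [] := ne_nil_of_mem_labelsFromLen le_rfl hx1
            have hfin : (labelsFromLen G L (relRng G L A w) N).Finite :=
              sa.setFinite _ (Bbar_relRng hL hA hwne) N hN
            rw [hf] at hx2
            simp only [dif_pos hfin] at hx2
            have hu : u ∈ labelsFromLen G L (relRng G L A w) N :=
              (Set.Finite.mem_toFinset _).mp hx2
            rw [labelsFromLen_one_eq] at hx1
            obtain ⟨a, ha, rfl⟩ := hx1
            rw [Set.Finite.mem_toFinset, labelsFromLen_succ_eq A N hN]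
            exact ⟨a, u, rfl, hu, ha⟩
          · rintro ⟨w₁, u₁⟩ hx₁ ⟨w₂, u₂⟩ hx₂ h
            have h1 := (Finset.mem_sigma.mp hx₁).1
            have h2 := (Finset.mem_sigma.mp hx₂).1
            rw [Set.Finite.mem_toFinset, labelsFromLen_one_eq] at h1 h2
            obtain ⟨a₁, -, rfl⟩ := h1
            obtain ⟨a₂, -, rfl⟩ := h2
            simp only [List.cons_append, List.nil_append, List.cons.injEq] at h
            obtain ⟨rfl, rfl⟩ := h
            rfl
          · intro γ hγ
            rw [Set.Finite.mem_toFinset, labelsFromLen_succ_eq A N hN] at hγ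
            obtain ⟨a, u, rfl, hu, ⟨e, he, hLe⟩⟩ := hγ
            have hane : ([a] : List 𝒜) ≠ [] := by simp
            have hfin : (labelsFromLen G L (relRng G L A [a]) N).Finite :=
              sa.setFinite _ (Bbar_relRng hL hA hane) N hN
            refine ⟨⟨[a], u⟩, ?_, rfl⟩
            rw [Finset.mem_sigma]
            constructor
            · rw [Set.Finite.mem_toFinset, labelsFromLen_one_eq]
              exact ⟨a, ⟨e, he, hLe⟩, rfl⟩
            · rw [hf]
              simp only [dif_pos hfin]
              exact (Set.Finite.mem_toFinset _).mpr hu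
          · intro x hx
            rfl

end Aux47Op

section Aux47Ideal

variable {V E 𝒜 B : Type*} [NonUnitalCStarAlgebra B] {G : DirGraph V E} {L : E → 𝒜}

/-- A nonemptiness predicate on optional words. -/
def OptNE (o : Option (List 𝒜)) : Prop := ∀ w : List 𝒜, o = some w → w ≠ []

lemma optNE_none : OptNE (none : Option (List 𝒜)) := fun _ h => by cases h

lemma optNE_some {w : List 𝒜} (hw : w ≠ []) : OptNE (some w) := fun _ h => by
  cases h; exact hw

/-- Extension of an optional word by a word. -/
def extO (o : Option (List 𝒜)) (v : List 𝒜) : List 𝒜 :=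
  match o with
  | none => v
  | some w => w ++ v

/-- `C` is covered by finitely many relative ranges of `B'`. -/
def Covered (G : DirGraph V E) (L : E → 𝒜) (B' C : Set V) : Prop :=
  ∃ (m : ℕ) (μ : Fin m → Option (List 𝒜)), (∀ i w, μ i = some w → w ≠ []) ∧
    C ⊆ ⋃ i, relRngE G L B' (μ i)

lemma covered_self (B' : Set V) : Covered G L B' B' := by
  refine ⟨1, fun _ => none, ?_, ?_⟩
  · intro i w h
    cases h
  · intro v hv
    exact Set.mem_iUnion.mpr ⟨0, hv⟩

lemma Covered.mono {B' C C' : Set V} (h : Covered G L B' C) (hsub : C' ⊆ C) :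
    Covered G L B' C' := by
  obtain ⟨m, μ, hμ, hC⟩ := h
  exact ⟨m, μ, hμ, hsub.trans hC⟩

lemma relRng_relRngE (B' : Set V) {o : Option (List 𝒜)} (ho : OptNE o)
    {v : List 𝒜} (hv : v ≠ []) :
    relRng G L (relRngE G L B' o) v = relRngE G L B' (some (extO o v)) := by
  cases o with
  | none => rfl
  | some w => exact (relRng_append B' (ho w rfl) hv).symm

lemma Covered.relRng' {B' C : Set V} (h : Covered G L B' C) {v : List 𝒜} (hv : v ≠ []) :
    Covered G L B' (relRng G L C v) := by
  obtain ⟨m, μ, hμ, hC⟩ := h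
  refine ⟨m, fun i => some (extO (μ i) v), ?_, ?_⟩
  · intro i w hw
    cases hw
    cases hμi : μ i with
    | none => simpa [extO, hμi] using hv
    | some u =>
      simp only [extO, hμi]
      intro hcontr
      exact hv (List.append_eq_nil_iff.mp hcontr).2
  · calc relRng G L C v ⊆ relRng G L (⋃ i, relRngE G L B' (μ i)) v :=
          relRng_mono hC v
      _ = ⋃ i, relRng G L (relRngE G L B' (μ i)) v := relRng_iUnion _ v
      _ = ⋃ i, relRngE G L B' (some (extO (μ i) v)) := by
          refine Set.iUnion_congr fun i => ?_
          exact relRng_relRngE B' (hμ i) hv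

variable (rep : LRep G L B)

/-- The generating set for the ideal generated by `p B'`. -/
def SGen (rep : LRep G L B) (B' : Set V) : Set B :=
  {x | ∃ (α β : Option (List 𝒜)) (C : Set V), Bbar G L C ∧ OptNE α ∧ OptNE β ∧
    Covered G L B' C ∧ x = rep.elt α C β}

lemma mem_SGen {B' C : Set V} {α β : Option (List 𝒜)} (hC : Bbar G L C)
    (hα : OptNE α) (hβ : OptNE β) (hcov : Covered G L B' C) :
    rep.elt α C β ∈ SGen rep B' :=
  ⟨α, β, C, hC, hα, hβ, hcov, rfl⟩

lemma elt_some_left (u : List 𝒜) (C : Set V) (β : Option (List 𝒜)) :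
    rep.elt (some u) C β = sWord rep.s u * rep.elt none C β := by
  cases β with
  | none => rfl
  | some w => exact mul_assoc _ _ _

lemma elt_star {C : Set V} (hC : Bbar G L C) (α β : Option (List 𝒜)) :
    star (rep.elt α C β) = rep.elt β C α := by
  cases α <;> cases β <;>
    simp [LRep.elt, star_mul, rep.p_sa C hC, mul_assoc]

lemma elt_lift_mul {C C' : Set V} {β β' : Option (List 𝒜)} {g : B}
    (hcore : rep.elt none C β * g = rep.elt none C' β') {α : Option (List 𝒜)} :
    rep.elt α C β * g = rep.elt α C' β' := by
  cases α with
  | none => exact hcore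
  | some u => rw [elt_some_left, mul_assoc, hcore, ← elt_some_left]

lemma elt_lift_mul_zero {C : Set V} {β : Option (List 𝒜)} {g : B}
    (hcore : rep.elt none C β * g = 0) {α : Option (List 𝒜)} :
    rep.elt α C β * g = 0 := by
  cases α with
  | none => exact hcore
  | some u => rw [elt_some_left, mul_assoc, hcore, mul_zero]

lemma star_sWord_mul_s_of_ne {b a : 𝒜} (hba : b ≠ a) (w : List 𝒜) :
    star (sWord rep.s (b :: w)) * rep.s a = 0 := by
  cases w with
  | nil => exact rep.s_orth b a hba
  | cons c w' =>
    rw [sWord_cons rep b (by simp), star_mul, mul_assoc, rep.s_orth b a hba, mul_zero]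

lemma SGen_mul_s (hL : Function.Surjective L) {B' : Set V} {x : B}
    (hx : x ∈ SGen rep B') (a : 𝒜) :
    x * rep.s a ∈ Submodule.span ℂ (SGen rep B') := by
  obtain ⟨α, β, C, hC, hα, hβ, hcov, rfl⟩ := hx
  have hBa : Bbar G L (rngW G L [a]) := Bbar.base [a] (isLabelWord_singleton hL a)
  cases β with
  | none =>
    have core : rep.p C * rep.s a = rep.s a * rep.p (relRng G L C [a]) := rep.p_s C a hC
    have hmem : rep.elt α C none * rep.s a ∈ SGen rep B' := by
      cases α with
      | none =>
        have : rep.elt none C none * rep.s a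
            = rep.elt (some [a]) (relRng G L C [a]) none := core
        rw [this]
        exact mem_SGen rep (Bbar_relRng hL hC (by simp)) (optNE_some (by simp))
          optNE_none (hcov.relRng' (by simp))
      | some u =>
        have hu : u ≠ [] := hα u rfl
        have : rep.elt (some u) C none * rep.s a
            = rep.elt (some (u ++ [a])) (relRng G L C [a]) none := by
          show sWord rep.s u * rep.p C * rep.s a = _
          have h2 : sWord rep.s u * rep.s a = sWord rep.s (u ++ [a]) :=
            (sWord_append rep (v := [a]) hu (by simp)).symm
          rw [mul_assoc, core, ← mul_assoc, h2]
          rfl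
        rw [this]
        exact mem_SGen rep (Bbar_relRng hL hC (by simp)) (optNE_some (by simp))
          optNE_none (hcov.relRng' (by simp))
    exact Submodule.subset_span hmem
  | some w =>
    have hwne : w ≠ [] := hβ w rfl
    cases w with
    | nil => exact absurd rfl hwne
    | cons b w' =>
      by_cases hab : b = a
      · subst hab
        cases w' with
        | nil =>
          have core : rep.elt none C (some [b]) * rep.s b
              = rep.elt none (C ∩ rngW G L [b]) none := by
            show rep.p C * star (rep.s b) * rep.s b = _
            rw [mul_assoc, rep.s_s b, rep.p_mul _ _ hC hBa]
            rfl
          rw [elt_lift_mul rep core]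
          exact Submodule.subset_span (mem_SGen rep (Bbar.inter _ _ hC hBa)
            hα optNE_none (hcov.mono Set.inter_subset_left))
        | cons c w'' =>
          have hδ : (c :: w'') ≠ [] := by simp
          have hbδ : (b :: c :: w'') ≠ [] := by simp
          have core : rep.elt none C (some (b :: c :: w'')) * rep.s b
              = rep.elt none (C ∩ rngW G L (b :: c :: w'')) (some (c :: w'')) := by
            show rep.p C * star (sWord rep.s (b :: c :: w'')) * rep.s b = _
            have h1 : star (sWord rep.s (b :: c :: w'')) * rep.s b
                = rep.p (rngW G L (b :: c :: w'')) * star (sWord rep.s (c :: w'')) := by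
              have := star_sWord_append_mul rep hL (u := [b]) (v := c :: w'')
                (by simp) hδ
              simpa [show sWord rep.s [b] = rep.s b from rfl] using this
            rw [mul_assoc, h1, ← mul_assoc,
              rep.p_mul _ _ hC (Bbar_rngW hL hbδ)]
            rfl
          rw [elt_lift_mul rep core]
          exact Submodule.subset_span (mem_SGen rep
            (Bbar.inter _ _ hC (Bbar_rngW hL hbδ)) hα (optNE_some hδ)
            (hcov.mono Set.inter_subset_left))
      · have core : rep.elt none C (some (b :: w')) * rep.s a = 0 := by
          show rep.p C * star (sWord rep.s (b :: w')) * rep.s a = 0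
          rw [mul_assoc, star_sWord_mul_s_of_ne rep hab w', mul_zero]
        rw [elt_lift_mul_zero rep core]
        exact Submodule.zero_mem _

lemma SGen_mul_star_s (hL : Function.Surjective L) {B' : Set V} {x : B}
    (hx : x ∈ SGen rep B') (a : 𝒜) :
    x * star (rep.s a) ∈ Submodule.span ℂ (SGen rep B') := by
  obtain ⟨α, β, C, hC, hα, hβ, hcov, rfl⟩ := hx
  have hBa : Bbar G L (rngW G L [a]) := Bbar.base [a] (isLabelWord_singleton hL a)
  cases β with
  | none =>
    have h1 : rep.s a * rep.p C = rep.s a * rep.p (rngW G L [a] ∩ C) := by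
      conv_lhs => rw [← s_mul_p_rngW rep a]
      rw [mul_assoc, rep.p_mul _ _ hBa hC]
    have core : rep.elt none C none * star (rep.s a)
        = rep.elt none (rngW G L [a] ∩ C) (some [a]) := by
      show rep.p C * star (rep.s a) = rep.p (rngW G L [a] ∩ C) * star (sWord rep.s [a])
      calc rep.p C * star (rep.s a) = star (rep.s a * rep.p C) := by
            rw [star_mul, rep.p_sa C hC]
        _ = star (rep.s a * rep.p (rngW G L [a] ∩ C)) := by rw [h1]
        _ = rep.p (rngW G L [a] ∩ C) * star (rep.s a) := by
            rw [star_mul, rep.p_sa _ (Bbar.inter _ _ hBa hC)]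
    rw [elt_lift_mul rep core]
    exact Submodule.subset_span (mem_SGen rep (Bbar.inter _ _ hBa hC) hα
      (optNE_some (by simp)) (hcov.mono Set.inter_subset_right))
  | some w =>
    have hwne : w ≠ [] := hβ w rfl
    have core : rep.elt none C (some w) * star (rep.s a)
        = rep.elt none C (some (a :: w)) := by
      show rep.p C * star (sWord rep.s w) * star (rep.s a) = _
      rw [mul_assoc, ← star_mul, ← sWord_cons rep a hwne]
      rfl
    rw [elt_lift_mul rep core]
    exact Submodule.subset_span (mem_SGen rep hC hα (optNE_some (by simp)) hcov)

lemma SGen_mul_p (hL : Function.Surjective L) {B' : Set V} {x : B}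
    (hx : x ∈ SGen rep B') {D : Set V} (hD : Bbar G L D) :
    x * rep.p D ∈ Submodule.span ℂ (SGen rep B') := by
  obtain ⟨α, β, C, hC, hα, hβ, hcov, rfl⟩ := hx
  cases β with
  | none =>
    have core : rep.elt none C none * rep.p D = rep.elt none (C ∩ D) none :=
      rep.p_mul C D hC hD
    rw [elt_lift_mul rep core]
    exact Submodule.subset_span (mem_SGen rep (Bbar.inter _ _ hC hD) hα optNE_none
      (hcov.mono Set.inter_subset_left))
  | some w =>
    have hwne : w ≠ [] := hβ w rfl
    have core : rep.elt none C (some w) * rep.p D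
        = rep.elt none (C ∩ relRng G L D w) (some w) := by
      show rep.p C * star (sWord rep.s w) * rep.p D = _
      have h1 : star (sWord rep.s w) * rep.p D
          = rep.p (relRng G L D w) * star (sWord rep.s w) := by
        calc star (sWord rep.s w) * rep.p D = star (rep.p D * sWord rep.s w) := by
              rw [star_mul, rep.p_sa D hD]
          _ = star (sWord rep.s w * rep.p (relRng G L D w)) := by
              rw [p_mul_sWord rep hL hD hwne]
          _ = rep.p (relRng G L D w) * star (sWord rep.s w) := by
              rw [star_mul, rep.p_sa _ (Bbar_relRng hL hD hwne)]
      rw [mul_assoc, h1, ← mul_assoc, rep.p_mul _ _ hC (Bbar_relRng hL hD hwne)]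
      rfl
    rw [elt_lift_mul rep core]
    exact Submodule.subset_span (mem_SGen rep
      (Bbar.inter _ _ hC (Bbar_relRng hL hD hwne)) hα (optNE_some hwne)
      (hcov.mono Set.inter_subset_left))

lemma SGen_star {B' : Set V} {x : B} (hx : x ∈ SGen rep B') :
    star x ∈ SGen rep B' := by
  obtain ⟨α, β, C, hC, hα, hβ, hcov, rfl⟩ := hx
  rw [elt_star rep hC]
  exact mem_SGen rep hC hβ hα hcov

end Aux47Ideal

section Aux47J

variable {V E 𝒜 B : Type*} [NonUnitalCStarAlgebra B] {G : DirGraph V E} {L : E → 𝒜}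
variable (rep : LRep G L B)

lemma span_SGen_star {B' : Set V} {x : B} (hx : x ∈ Submodule.span ℂ (SGen rep B')) :
    star x ∈ Submodule.span ℂ (SGen rep B') := by
  induction hx using Submodule.span_induction with
  | mem x hx => exact Submodule.subset_span (SGen_star rep hx)
  | zero => rw [star_zero]; exact Submodule.zero_mem _
  | add x y _ _ hx hy => rw [star_add]; exact Submodule.add_mem _ hx hy
  | smul c x _ hx => rw [star_smul]; exact Submodule.smul_mem _ _ hx

lemma span_SGen_mul_gen (hL : Function.Surjective L) {B' : Set V} {x : B}
    (hx : x ∈ Submodule.span ℂ (SGen rep B')) {g : B}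
    (hg : (∃ a, g = rep.s a) ∨ (∃ a, g = star (rep.s a)) ∨
      (∃ D, Bbar G L D ∧ g = rep.p D)) :
    x * g ∈ Submodule.span ℂ (SGen rep B') := by
  induction hx using Submodule.span_induction with
  | mem x hx =>
    rcases hg with ⟨a, rfl⟩ | ⟨a, rfl⟩ | ⟨D, hD, rfl⟩
    · exact SGen_mul_s rep hL hx a
    · exact SGen_mul_star_s rep hL hx a
    · exact SGen_mul_p rep hL hx hD
  | zero => rw [zero_mul]; exact Submodule.zero_mem _
  | add x y _ _ hx hy => rw [add_mul]; exact Submodule.add_mem _ hx hy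
  | smul c x _ hx => rw [smul_mul_assoc]; exact Submodule.smul_mem _ _ hx

lemma adjoin_mul_span (hL : Function.Surjective L) {B' : Set V} {y : B}
    (hy : y ∈ NonUnitalStarAlgebra.adjoin ℂ
      ({x : B | ∃ a : 𝒜, x = rep.s a} ∪
        {x : B | ∃ A : Set V, Bbar G L A ∧ x = rep.p A})) :
    ∀ x ∈ Submodule.span ℂ (SGen rep B'),
      x * y ∈ Submodule.span ℂ (SGen rep B') ∧
      y * x ∈ Submodule.span ℂ (SGen rep B') := by
  induction hy using NonUnitalStarAlgebra.adjoin_induction with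
  | mem g hg =>
    intro x hx
    have hg' : (∃ a, g = rep.s a) ∨ (∃ a, g = star (rep.s a)) ∨
        (∃ D, Bbar G L D ∧ g = rep.p D) := by
      rcases hg with ⟨a, rfl⟩ | ⟨D, hD, rfl⟩
      · exact Or.inl ⟨a, rfl⟩
      · exact Or.inr (Or.inr ⟨D, hD, rfl⟩)
    constructor
    · exact span_SGen_mul_gen rep hL hx hg'
    · have hstarg : (∃ a, star g = rep.s a) ∨ (∃ a, star g = star (rep.s a)) ∨
          (∃ D, Bbar G L D ∧ star g = rep.p D) := by
        rcases hg with ⟨a, rfl⟩ | ⟨D, hD, rfl⟩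
        · exact Or.inr (Or.inl ⟨a, rfl⟩)
        · exact Or.inr (Or.inr ⟨D, hD, rep.p_sa D hD⟩)
      have h1 : star x * star g ∈ Submodule.span ℂ (SGen rep B') :=
        span_SGen_mul_gen rep hL (span_SGen_star rep hx) hstarg
      have h2 := span_SGen_star rep h1
      rwa [star_mul, star_star, star_star] at h2
  | add y z _ _ ihy ihz =>
    intro x hx
    constructor
    · rw [mul_add]; exact Submodule.add_mem _ (ihy x hx).1 (ihz x hx).1
    · rw [add_mul]; exact Submodule.add_mem _ (ihy x hx).2 (ihz x hx).2
  | zero =>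
    intro x hx
    constructor
    · rw [mul_zero]; exact Submodule.zero_mem _
    · rw [zero_mul]; exact Submodule.zero_mem _
  | mul y z _ _ ihy ihz =>
    intro x hx
    constructor
    · rw [← mul_assoc]; exact (ihz _ ((ihy x hx).1)).1
    · rw [mul_assoc]; exact (ihy _ ((ihz x hx).2)).2
  | smul c y _ ihy =>
    intro x hx
    constructor
    · rw [mul_smul_comm]; exact Submodule.smul_mem _ _ (ihy x hx).1
    · rw [smul_mul_assoc]; exact Submodule.smul_mem _ _ (ihy x hx).2
  | star y _ ihy =>
    intro x hx
    constructor
    · have h1 := (ihy (star x) (span_SGen_star rep hx)).2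
      have h2 := span_SGen_star rep h1
      rwa [star_mul, star_star] at h2
    · have h1 := (ihy (star x) (span_SGen_star rep hx)).1
      have h2 := span_SGen_star rep h1
      rwa [star_mul, star_star] at h2

end Aux47J

section Aux47Phi

open intervalIntegral

variable {V E 𝒜 B : Type*} [NonUnitalCStarAlgebra B] {G : DirGraph V E} {L : E → 𝒜}
variable (rep : LRep G L B) (ga : GaugeAction G L rep)

/-- The gauge expectation. -/
noncomputable def Phi (x : B) : B :=
  (2 * Real.pi)⁻¹ • ∫ t in (0:ℝ)..(2 * Real.pi), ga.γ (Circle.exp t) x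

lemma gamma_exp_continuous (x : B) :
    Continuous fun t : ℝ => ga.γ (Circle.exp t) x :=
  (ga.γ_continuous x).comp Circle.exp.continuous

lemma gamma_exp_intervalIntegrable (x : B) :
    IntervalIntegrable (fun t : ℝ => ga.γ (Circle.exp t) x)
      MeasureTheory.volume 0 (2 * Real.pi) :=
  (gamma_exp_continuous rep ga x).intervalIntegrable 0 (2 * Real.pi)

lemma norm_gamma (z : Circle) (x : B) : ‖ga.γ z x‖ = ‖x‖ :=
  NonUnitalStarAlgHom.norm_map (ga.γ z) (ga.γ z).injective x

lemma Phi_norm_le (x : B) : ‖Phi rep ga x‖ ≤ ‖x‖ := by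
  have hπ : (0:ℝ) < 2 * Real.pi := by positivity
  have h1 : ‖∫ t in (0:ℝ)..(2 * Real.pi), ga.γ (Circle.exp t) x‖
      ≤ ‖x‖ * |2 * Real.pi - 0| := by
    apply intervalIntegral.norm_integral_le_of_norm_le_const
    intro t _
    exact le_of_eq (norm_gamma rep ga _ x)
  rw [Phi, norm_smul, Real.norm_eq_abs, abs_of_pos (inv_pos.mpr hπ)]
  calc (2 * Real.pi)⁻¹ * ‖∫ t in (0:ℝ)..(2 * Real.pi), ga.γ (Circle.exp t) x‖
      ≤ (2 * Real.pi)⁻¹ * (‖x‖ * |2 * Real.pi - 0|) :=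
        mul_le_mul_of_nonneg_left h1 (le_of_lt (inv_pos.mpr hπ))
    _ = ‖x‖ := by
        rw [sub_zero, abs_of_pos hπ]
        field_simp

lemma Phi_p (hA : Bbar G L A) : Phi rep ga (rep.p A) = rep.p A := by
  have hπ : (0:ℝ) < 2 * Real.pi := by positivity
  have h1 : (fun t : ℝ => ga.γ (Circle.exp t) (rep.p A)) = fun _ => rep.p A :=
    funext fun t => ga.γ_p _ A hA
  rw [Phi, h1, intervalIntegral.integral_const, smul_smul, sub_zero,
    inv_mul_cancel₀ (ne_of_gt hπ), one_smul]

lemma Phi_sub (x y : B) : Phi rep ga (x - y) = Phi rep ga x - Phi rep ga y := by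
  rw [Phi, Phi, Phi, ← smul_sub, ← intervalIntegral.integral_sub
    (gamma_exp_intervalIntegrable rep ga x) (gamma_exp_intervalIntegrable rep ga y)]
  congr 1
  apply intervalIntegral.integral_congr
  intro t _
  exact map_sub (ga.γ (Circle.exp t)) x y

lemma Phi_smul (c : ℂ) (x : B) : Phi rep ga (c • x) = c • Phi rep ga x := by
  rw [Phi, Phi]
  have h1 : (fun t : ℝ => ga.γ (Circle.exp t) (c • x))
      = fun t : ℝ => c • ga.γ (Circle.exp t) x :=
    funext fun t => map_smul (ga.γ (Circle.exp t)) c x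
  rw [h1, intervalIntegral.integral_smul, smul_comm]

lemma Phi_sum {ι : Type*} (s : Finset ι) (f : ι → B) :
    Phi rep ga (∑ i ∈ s, f i) = ∑ i ∈ s, Phi rep ga (f i) := by
  rw [Phi]
  have h1 : (fun t : ℝ => ga.γ (Circle.exp t) (∑ i ∈ s, f i))
      = fun t : ℝ => ∑ i ∈ s, ga.γ (Circle.exp t) (f i) :=
    funext fun t => map_sum (ga.γ (Circle.exp t)) f s
  rw [h1, intervalIntegral.integral_finset_sum
    (fun i _ => gamma_exp_intervalIntegrable rep ga (f i)), Finset.smul_sum]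
  rfl

lemma gauge_sWord (z : Circle) :
    ∀ {w : List 𝒜}, w ≠ [] →
      ga.γ z (sWord rep.s w) = ((z : ℂ) ^ w.length) • sWord rep.s w := by
  intro w
  induction w with
  | nil => intro h; exact absurd rfl h
  | cons a w' ih =>
    intro _
    cases w' with
    | nil => simpa [show sWord rep.s [a] = rep.s a from rfl] using ga.γ_s z a
    | cons b w'' =>
      rw [sWord_cons rep a (by simp), map_mul, ga.γ_s z a, ih (by simp),
        smul_mul_smul_comm, ← pow_succ']
      rw [← sWord_cons rep a (by simp)]
      rfl

/-- Length of an optional word. -/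
def optLen : Option (List 𝒜) → ℕ
  | none => 0
  | some w => w.length

lemma gauge_elt (z : Circle) {C : Set V} (hC : Bbar G L C) {α β : Option (List 𝒜)}
    (hα : OptNE α) (hβ : OptNE β) :
    ga.γ z (rep.elt α C β)
      = (((z : ℂ) ^ optLen α) * (starRingEnd ℂ) ((z : ℂ) ^ optLen β)) •
          rep.elt α C β := by
  have hp := ga.γ_p z C hC
  cases α with
  | none =>
    cases β with
    | none => simp [LRep.elt, optLen, hp]
    | some w =>
      have hw : w ≠ [] := hβ w rfl
      show ga.γ z (rep.p C * star (sWord rep.s w)) = _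
      rw [map_mul, hp, map_star, gauge_sWord rep ga z hw, star_smul, mul_smul_comm]
      simp [optLen]
      rfl
  | some u =>
    have hu : u ≠ [] := hα u rfl
    cases β with
    | none =>
      show ga.γ z (sWord rep.s u * rep.p C) = _
      rw [map_mul, hp, gauge_sWord rep ga z hu, smul_mul_assoc]
      simp only [optLen, pow_zero, map_one, mul_one]
      rfl
    | some w =>
      have hw : w ≠ [] := hβ w rfl
      show ga.γ z (sWord rep.s u * rep.p C * star (sWord rep.s w)) = _
      rw [map_mul, map_mul, hp, map_star, gauge_sWord rep ga z hu,
        gauge_sWord rep ga z hw, star_smul, smul_mul_assoc, smul_mul_smul_comm]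
      rfl

lemma Phi_elt {C : Set V} (hC : Bbar G L C) {α β : Option (List 𝒜)}
    (hα : OptNE α) (hβ : OptNE β) :
    Phi rep ga (rep.elt α C β)
      = if optLen α = optLen β then rep.elt α C β else 0 := by
  have hπ : (0:ℝ) < 2 * Real.pi := by positivity
  have hint : ∀ t : ℝ, ga.γ (Circle.exp t) (rep.elt α C β)
      = Complex.exp (((optLen α : ℂ) - (optLen β : ℂ)) * t * Complex.I) •
          rep.elt α C β := by
    intro t
    rw [gauge_elt rep ga _ hC hα hβ]
    congr 1
    have hcoe : ((Circle.exp t : Circle) : ℂ) = Complex.exp (t * Complex.I) :=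
      Circle.coe_exp t
    rw [hcoe, ← Complex.exp_nat_mul, ← Complex.exp_nat_mul, ← Complex.exp_conj,
      ← Complex.exp_add]
    congr 1
    have hconj : (starRingEnd ℂ) ((optLen β : ℂ) * ((t:ℝ) * Complex.I))
        = (optLen β : ℂ) * ((t:ℝ) * -Complex.I) := by
      simp [map_mul, Complex.conj_ofReal, Complex.conj_I]
    rw [hconj]
    ring
  by_cases hd : optLen α = optLen β
  · rw [if_pos hd]
    have h0 : (fun t : ℝ => ga.γ (Circle.exp t) (rep.elt α C β))
        = fun _ => rep.elt α C β := by
      funext t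
      rw [hint t, hd, sub_self, zero_mul, zero_mul, Complex.exp_zero, one_smul]
    rw [Phi, h0, intervalIntegral.integral_const, smul_smul, sub_zero,
      inv_mul_cancel₀ (ne_of_gt hπ), one_smul]
  · rw [if_neg hd]
    have hc : ((optLen α : ℂ) - (optLen β : ℂ)) * Complex.I ≠ 0 := by
      apply mul_ne_zero _ Complex.I_ne_zero
      exact sub_ne_zero.mpr (by exact_mod_cast hd)
    have h0 : (fun t : ℝ => ga.γ (Circle.exp t) (rep.elt α C β))
        = fun t : ℝ => Complex.exp ((((optLen α : ℂ) - (optLen β : ℂ)) * Complex.I)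
            * (t : ℂ)) • rep.elt α C β := by
      funext t
      rw [hint t]
      congr 2
      ring
    rw [Phi, h0, intervalIntegral.integral_smul_const,
      integral_exp_mul_complex hc]
    have h2 : Complex.exp ((((optLen α : ℂ) - (optLen β : ℂ)) * Complex.I)
        * ((2 * Real.pi : ℝ) : ℂ)) = 1 := by
      have h4 : (((optLen α : ℂ) - (optLen β : ℂ)) * Complex.I)
          * ((2 * Real.pi : ℝ) : ℂ)
          = (((optLen α : ℤ) - (optLen β : ℤ) : ℤ) : ℂ)
              * (2 * (Real.pi : ℂ) * Complex.I) := by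
        push_cast
        ring
      rw [h4]
      exact Complex.exp_int_mul_two_pi_mul_I _
    have h3 : Complex.exp ((((optLen α : ℂ) - (optLen β : ℂ)) * Complex.I)
        * ((0 : ℝ) : ℂ)) = 1 := by
      norm_num
    rw [h2, h3, sub_self, zero_div, zero_smul, smul_zero]

lemma norm_qxq_le {q x y : B} (hq : ‖q‖ ≤ 1) (hx : ‖x‖ ≤ 1) :
    ‖q * (star x * y * x) * q‖ ≤ ‖y‖ := by
  have hxs : ‖star x‖ ≤ 1 := by rw [norm_star]; exact hx
  have h1 : ‖star x * y * x‖ ≤ ‖y‖ := by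
    calc ‖star x * y * x‖ ≤ ‖star x * y‖ * ‖x‖ := norm_mul_le _ _
      _ ≤ (‖star x‖ * ‖y‖) * ‖x‖ :=
          mul_le_mul_of_nonneg_right (norm_mul_le _ _) (norm_nonneg _)
      _ ≤ ‖y‖ := by
          have e1 : ‖star x‖ * ‖y‖ ≤ ‖y‖ := mul_le_of_le_one_left (norm_nonneg y) hxs
          have e2 : (‖star x‖ * ‖y‖) * ‖x‖ ≤ ‖star x‖ * ‖y‖ :=
            mul_le_of_le_one_right (mul_nonneg (norm_nonneg _) (norm_nonneg _)) hx
          linarith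
  calc ‖q * (star x * y * x) * q‖ ≤ ‖q * (star x * y * x)‖ * ‖q‖ := norm_mul_le _ _
    _ ≤ (‖q‖ * ‖star x * y * x‖) * ‖q‖ :=
        mul_le_mul_of_nonneg_right (norm_mul_le _ _) (norm_nonneg _)
    _ ≤ ‖y‖ := by
        have e1 : ‖q‖ * ‖star x * y * x‖ ≤ ‖star x * y * x‖ :=
          mul_le_of_le_one_left (norm_nonneg _) hq
        have e2 : (‖q‖ * ‖star x * y * x‖) * ‖q‖ ≤ ‖q‖ * ‖star x * y * x‖ :=
          mul_le_of_le_one_right (mul_nonneg (norm_nonneg _) (norm_nonneg _)) hq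
        linarith

end Aux47Phi

section Aux47Final

variable {V E 𝒜 B : Type*} [NonUnitalCStarAlgebra B] {G : DirGraph V E} {L : E → 𝒜}
variable (rep : LRep G L B)

lemma Bbar_diff_biUnion (hL : Function.Surjective L) {B' : Set V} (hB' : Bbar G L B')
    (F : Finset (List 𝒜)) (hF : ∀ w ∈ F, w ≠ []) {A' : Set V} (hA' : Bbar G L A') :
    Bbar G L (A' \ ⋃ w ∈ F, relRng G L B' w) := by
  classical
  induction F using Finset.induction_on with
  | empty => simpa using hA'
  | @insert a F hnotmem ih =>
    have h1 : (⋃ w ∈ insert a F, relRng G L B' w)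
        = (⋃ w ∈ F, relRng G L B' w) ∪ relRng G L B' a := by
      rw [Finset.set_biUnion_insert, Set.union_comm]
    rw [h1, ← Set.diff_diff]
    exact Bbar.diff _ _ (ih (fun w hw => hF w (Finset.mem_insert_of_mem hw)))
      (Bbar_relRng hL hB' (hF a (Finset.mem_insert_self a F)))

lemma p_mem_of_subset_iUnion {I : Set B} (h0 : (0:B) ∈ I)
    (hadd : ∀ x ∈ I, ∀ y ∈ I, x + y ∈ I)
    (hmul : ∀ x ∈ I, ∀ y : B, x * y ∈ I ∧ y * x ∈ I) :
    ∀ (nn : ℕ) (f : Fin nn → Set V), (∀ i, Bbar G L (f i)) → (∀ i, rep.p (f i) ∈ I) →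
      ∀ D : Set V, Bbar G L D → D ⊆ (⋃ i, f i) → rep.p D ∈ I := by
  intro nn
  induction nn with
  | zero =>
    intro f _ _ D _ hsub
    have hD : D = ∅ := by
      rw [Set.iUnion_of_empty] at hsub
      exact Set.subset_empty_iff.mp hsub
    rw [hD, rep.p_empty]
    exact h0
  | succ nn ih =>
    intro f hBf hpf D hD hsub
    have hB1 : Bbar G L (D ∩ f 0) := Bbar.inter _ _ hD (hBf 0)
    have hB2 : Bbar G L (D \ f 0) := Bbar.diff _ _ hD (hBf 0)
    have hdisj : (D ∩ f 0) ∩ (D \ f 0) = ∅ := by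
      ext v
      simp only [Set.mem_inter_iff, Set.mem_diff, Set.mem_empty_iff_false, iff_false]
      tauto
    have hp1 : rep.p (D ∩ f 0) ∈ I := by
      have heq : rep.p (D ∩ f 0) = rep.p (D ∩ f 0) * rep.p (f 0) := by
        rw [rep.p_mul _ _ hB1 (hBf 0), Set.inter_assoc, Set.inter_self]
      rw [heq]
      exact (hmul _ (hpf 0) (rep.p (D ∩ f 0))).2
    have hp2 : rep.p (D \ f 0) ∈ I := by
      apply ih (fun i => f i.succ) (fun i => hBf i.succ) (fun i => hpf i.succ) _ hB2
      intro v hv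
      obtain ⟨hvD, hvnot⟩ := hv
      obtain ⟨i, hi⟩ := Set.mem_iUnion.mp (hsub hvD)
      rcases Fin.eq_zero_or_eq_succ i with rfl | ⟨j, rfl⟩
      · exact absurd hi hvnot
      · exact Set.mem_iUnion.mpr ⟨j, hi⟩
    have hsplit : D = (D ∩ f 0) ∪ (D \ f 0) := (Set.inter_union_diff D (f 0)).symm
    have heq : rep.p D = rep.p (D ∩ f 0) + rep.p (D \ f 0) := by
      calc rep.p D = rep.p ((D ∩ f 0) ∪ (D \ f 0)) := by rw [← hsplit]
        _ = rep.p (D ∩ f 0) + rep.p (D \ f 0) - rep.p ((D ∩ f 0) ∩ (D \ f 0)) :=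
            rep.p_union _ _ hB1 hB2
        _ = rep.p (D ∩ f 0) + rep.p (D \ f 0) := by rw [hdisj, rep.p_empty, sub_zero]
    rw [heq]
    exact hadd _ hp1 _ hp2

lemma compression_vanishes (hL : Function.Surjective L)
    {C : Set V} (hC : Bbar G L C) {α β : Option (List 𝒜)} (hα : OptNE α) (hβ : OptNE β)
    (hlen : optLen α = optLen β)
    {β' : List 𝒜} (hβ'ne : β' ≠ []) (hklt : optLen α < β'.length)
    {Q : Set V} (hQbar : Bbar G L Q)
    (hdisj : Q ∩ relRng G L C (List.drop (optLen α) β') = ∅) :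
    rep.p Q * (star (sWord rep.s β') * rep.elt α C β * sWord rep.s β') * rep.p Q = 0 := by
  cases α with
  | none =>
    cases β with
    | some w =>
      exfalso
      have hw0 : w.length = 0 := by simpa [optLen] using hlen.symm
      exact (hβ w rfl) (List.eq_nil_of_length_eq_zero hw0)
    | none =>
      have hdisj' : Q ∩ relRng G L C β' = ∅ := by
        simpa [optLen, List.drop_zero] using hdisj
      have hrel : Bbar G L (relRng G L C β') := Bbar_relRng hL hC hβ'ne
      have hM : star (sWord rep.s β') * rep.elt none C none * sWord rep.s β'
          = rep.p (rngW G L β' ∩ relRng G L C β') := by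
        show star (sWord rep.s β') * rep.p C * sWord rep.s β' = _
        rw [mul_assoc, p_mul_sWord rep hL hC hβ'ne, ← mul_assoc,
          star_sWord_mul_self rep hL hβ'ne,
          rep.p_mul _ _ (Bbar_rngW hL hβ'ne) hrel]
      rw [hM, rep.p_mul _ _ hQbar (Bbar.inter _ _ (Bbar_rngW hL hβ'ne) hrel)]
      have hempty : Q ∩ (rngW G L β' ∩ relRng G L C β') = ∅ := by
        apply Set.eq_empty_of_subset_empty
        intro v hv
        rw [← hdisj']
        exact ⟨hv.1, hv.2.2⟩
      rw [hempty, rep.p_empty, zero_mul]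
  | some u =>
    have hu : u ≠ [] := hα u rfl
    cases β with
    | none =>
      exfalso
      have hu0 : u.length = 0 := by simpa [optLen] using hlen
      exact hu (List.eq_nil_of_length_eq_zero hu0)
    | some w =>
      have hw : w ≠ [] := hβ w rfl
      have hk : optLen (some u) = u.length := rfl
      set k := u.length with hkdef
      have hwlen : w.length = k := by
        have := hlen
        simpa [optLen] using this.symm
      set t := List.take k β' with ht
      set δ := List.drop k β' with hδ
      have hsplit : β' = t ++ δ := (List.take_append_drop k β').symm
      have htlen : t.length = k := by
        rw [ht, List.length_take]
        have : k < β'.length := hklt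
        omega
      have htne : t ≠ [] := by
        intro h
        rw [h] at htlen
        have : 0 < k := List.length_pos_iff.mpr hu
        simp at htlen
        omega
      have hδne : δ ≠ [] := by
        intro h
        have h1 : β'.length - k = 0 := by rw [hδ] at h; simpa using congrArg List.length h
        have : k < β'.length := hklt
        omega
      have hsβ : sWord rep.s β' = sWord rep.s t * sWord rep.s δ := by
        have h := sWord_append rep (u := t) (v := δ) htne hδne
        rw [← hsplit] at h
        exact h
      have hrngWβ' : Bbar G L (rngW G L β') := Bbar_rngW hL hβ'ne
      by_cases hut : u = t
      · by_cases hwt : w = t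
        · rw [hut, hwt]
          have h1 : star (sWord rep.s β') * sWord rep.s t
              = rep.p (rngW G L β') * star (sWord rep.s δ) := by
            have h := star_sWord_append_mul rep hL (u := t) (v := δ) htne hδne
            rw [← hsplit] at h
            exact h
          have h2 : star (sWord rep.s t) * sWord rep.s β'
              = sWord rep.s δ * rep.p (rngW G L β') := by
            have h := star_sWord_mul_append rep hL (u := t) (v := δ) htne hδne
            rw [← hsplit] at h
            exact h
          have hrelδ : Bbar G L (relRng G L C δ) := Bbar_relRng hL hC hδne
          have h4 : star (sWord rep.s δ) * rep.p C * sWord rep.s δ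
              = rep.p (rngW G L δ ∩ relRng G L C δ) := by
            rw [mul_assoc, p_mul_sWord rep hL hC hδne, ← mul_assoc,
              star_sWord_mul_self rep hL hδne,
              rep.p_mul _ _ (Bbar_rngW hL hδne) hrelδ]
          have hM : star (sWord rep.s β') * rep.elt (some t) C (some t) * sWord rep.s β'
              = rep.p (rngW G L β' ∩ ((rngW G L δ ∩ relRng G L C δ) ∩ rngW G L β')) := by
            show star (sWord rep.s β') * (sWord rep.s t * rep.p C * star (sWord rep.s t)) *
                sWord rep.s β' = _
            calc star (sWord rep.s β') * (sWord rep.s t * rep.p C * star (sWord rep.s t)) *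
                  sWord rep.s β'
                = (star (sWord rep.s β') * sWord rep.s t) *
                    (rep.p C * (star (sWord rep.s t) * sWord rep.s β')) := by
                  simp only [mul_assoc]
              _ = (rep.p (rngW G L β') * star (sWord rep.s δ)) *
                    (rep.p C * (sWord rep.s δ * rep.p (rngW G L β'))) := by rw [h1, h2]
              _ = rep.p (rngW G L β') *
                    ((star (sWord rep.s δ) * rep.p C * sWord rep.s δ) *
                      rep.p (rngW G L β')) := by simp only [mul_assoc]
              _ = rep.p (rngW G L β') *
                    (rep.p (rngW G L δ ∩ relRng G L C δ) * rep.p (rngW G L β')) := by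
                  rw [h4]
              _ = _ := by
                  rw [rep.p_mul _ _ (Bbar.inter _ _ (Bbar_rngW hL hδne) hrelδ) hrngWβ',
                    rep.p_mul _ _ hrngWβ'
                      (Bbar.inter _ _ (Bbar.inter _ _ (Bbar_rngW hL hδne) hrelδ) hrngWβ')]
          rw [hM, rep.p_mul _ _ hQbar (Bbar.inter _ _ hrngWβ'
            (Bbar.inter _ _ (Bbar.inter _ _ (Bbar_rngW hL hδne) hrelδ) hrngWβ'))]
          have hempty : Q ∩ (rngW G L β' ∩ ((rngW G L δ ∩ relRng G L C δ) ∩ rngW G L β'))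
              = ∅ := by
            apply Set.eq_empty_of_subset_empty
            intro v hv
            rw [← hdisj]
            exact ⟨hv.1, hv.2.2.1.2⟩
          rw [hempty, rep.p_empty, zero_mul]
        · -- w ≠ t : the right factor vanishes
          have hzero : rep.elt (some u) C (some w) * sWord rep.s β' = 0 := by
            show sWord rep.s u * rep.p C * star (sWord rep.s w) * sWord rep.s β' = 0
            have h5 : star (sWord rep.s w) * sWord rep.s β' = 0 := by
              rw [hsβ, ← mul_assoc,
                star_sWord_mul_of_ne rep hL (by rw [hwlen, htlen]) hw hwt, zero_mul]
            rw [mul_assoc, mul_assoc, h5, mul_zero, mul_zero]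
          have hX : star (sWord rep.s β') * rep.elt (some u) C (some w) * sWord rep.s β'
              = 0 := by
            rw [mul_assoc, hzero, mul_zero]
          rw [hX, mul_zero, zero_mul]
      · -- u ≠ t : the left factor vanishes
        have hzero : star (sWord rep.s β') * rep.elt (some u) C (some w) = 0 := by
          rw [elt_some_left, ← mul_assoc]
          have h5 : star (sWord rep.s β') * sWord rep.s u = 0 := by
            have h6 : star (sWord rep.s u) * sWord rep.s β' = 0 := by
              rw [hsβ, ← mul_assoc,
                star_sWord_mul_of_ne rep hL (by rw [htlen]) hu hut, zero_mul]
            have h7 := congrArg star h6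
            rw [star_mul, star_star, star_zero] at h7
            exact h7
          rw [h5, zero_mul]
        have hX : star (sWord rep.s β') * rep.elt (some u) C (some w) * sWord rep.s β'
            = 0 := by
          rw [hzero, zero_mul]
        rw [hX, mul_zero, zero_mul]

end Aux47Final
/-- Lemma 4.7. Suppose `(E, L)` has no sinks or sources and
let `{s_a, p_A}` be a representation of `(E, L, 𝔅̄)` in a C*-algebra `B`
generated by it, with `p_C ≠ 0` for every nonempty `C ∈ 𝔅̄`, admitting a gauge
action. Then for `A, B' ∈ 𝔅̄`, `p_A` lies in the closed two-sided ideal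
generated by `p_{B'}` iff there are `N ≥ 1` and finitely many
`μ_1, …, μ_n ∈ L(B' E^{≥0})` with
`⋃_{β ∈ L(A E^N)} r(A, β) ⊆ ⋃ᵢ r(B', μ_i)`. -/
theorem mem_closedIdeal_iff_relRng_subset {V E 𝒜 B : Type*}
    [Countable V] [Countable E] [Countable 𝒜]
    [NonUnitalCStarAlgebra B]
    (G : DirGraph V E) (L : E → 𝒜) (hL : Function.Surjective L)
    (hnosink : G.sinks = ∅) (hnosource : ∀ v : V, ∃ e, G.rng e = v)
    (sa : StandingAssumptions G L)
    (rep : LRep G L B)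
    (hp : ∀ C : Set V, Bbar G L C → C.Nonempty → rep.p C ≠ 0)
    (hgen : GeneratesAlg G L rep)
    (ga : GaugeAction G L rep)
    (A B' : Set V) (hA : Bbar G L A) (hB' : Bbar G L B') :
    rep.p A ∈ closedIdealGen B (rep.p B') ↔
      ∃ N : ℕ, 1 ≤ N ∧ ∃ (n : ℕ) (μ : Fin n → Option (List 𝒜)),
        (∀ (i : Fin n) (w : List 𝒜), μ i = some w → w ∈ labelsFromGe G L B' 1) ∧
        (⋃ β ∈ labelsFromLen G L A N, relRng G L A β) ⊆
          ⋃ i, relRngE G L B' (μ i) := by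
  classical
  set Sp : Submodule ℂ B := Submodule.span ℂ (SGen rep B') with hSp
  have hMcoe : ((Sp.topologicalClosure : Submodule ℂ B) : Set B)
      = closure (Sp : Set B) := Submodule.topologicalClosure_coe Sp
  have hmulSS : ∀ x ∈ (Sp : Set B), ∀ y : B,
      x * y ∈ closure (Sp : Set B) ∧ y * x ∈ closure (Sp : Set B) := by
    intro x hx y
    have hadj : ∀ y' ∈ NonUnitalStarAlgebra.adjoin ℂ
        ({x : B | ∃ a : 𝒜, x = rep.s a} ∪
          {x : B | ∃ A : Set V, Bbar G L A ∧ x = rep.p A}),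
        x * y' ∈ Sp ∧ y' * x ∈ Sp := fun y' hy' => adjoin_mul_span rep hL hy' x hx
    have hyuniv : y ∈ closure (↑(NonUnitalStarAlgebra.adjoin ℂ
        ({x : B | ∃ a : 𝒜, x = rep.s a} ∪
          {x : B | ∃ A : Set V, Bbar G L A ∧ x = rep.p A})) : Set B) := by
      rw [hgen]
      trivial
    constructor
    · have hclosed : IsClosed {y' : B | x * y' ∈ closure (Sp : Set B)} :=
        IsClosed.preimage (continuous_const.mul continuous_id) isClosed_closure
      exact (IsClosed.closure_subset_iff hclosed).mpr
        (fun y' hy' => subset_closure (hadj y' hy').1) hyuniv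
    · have hclosed : IsClosed {y' : B | y' * x ∈ closure (Sp : Set B)} :=
        IsClosed.preimage (continuous_id.mul continuous_const) isClosed_closure
      exact (IsClosed.closure_subset_iff hclosed).mpr
        (fun y' hy' => subset_closure (hadj y' hy').2) hyuniv
  have hmulJ : ∀ x ∈ closure (Sp : Set B), ∀ y : B,
      x * y ∈ closure (Sp : Set B) ∧ y * x ∈ closure (Sp : Set B) := by
    intro x hx y
    constructor
    · have hclosed : IsClosed {x' : B | x' * y ∈ closure (Sp : Set B)} :=
        IsClosed.preimage (continuous_id.mul continuous_const) isClosed_closure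
      exact (IsClosed.closure_subset_iff hclosed).mpr
        (fun x' hx' => (hmulSS x' hx' y).1) hx
    · have hclosed : IsClosed {x' : B | y * x' ∈ closure (Sp : Set B)} :=
        IsClosed.preimage (continuous_const.mul continuous_id) isClosed_closure
      exact (IsClosed.closure_subset_iff hclosed).mpr
        (fun x' hx' => (hmulSS x' hx' y).2) hx
  have hJideal : IsClosedTwoSidedIdealSet B (closure (Sp : Set B)) := by
    refine ⟨isClosed_closure, subset_closure (Submodule.zero_mem Sp), ?_, ?_, hmulJ⟩
    · intro x hx y hy
      rw [← hMcoe] at hx hy ⊢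
      exact Submodule.add_mem _ hx hy
    · intro c x hx
      rw [← hMcoe] at hx ⊢
      exact Submodule.smul_mem _ c hx
  have hpB'J : rep.p B' ∈ closure (Sp : Set B) := by
    have h1 : rep.elt none B' none ∈ SGen rep B' :=
      mem_SGen rep hB' optNE_none optNE_none (covered_self B')
    exact subset_closure (Submodule.subset_span h1)
  constructor
  · -- Forward direction
    intro hmem
    have hPA : rep.p A ∈ closure (Sp : Set B) :=
      Set.sInter_subset_of_mem
        (show closure (Sp : Set B) ∈
          {I : Set B | IsClosedTwoSidedIdealSet B I ∧ rep.p B' ∈ I}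
          from ⟨hJideal, hpB'J⟩) hmem
    obtain ⟨z, hzmem, hzdist⟩ := Metric.mem_closure_iff.mp hPA (1/2) (by norm_num)
    have hznorm : ‖rep.p A - z‖ < 1/2 := by rwa [dist_eq_norm] at hzdist
    have hzspan : z ∈ Submodule.span ℂ (SGen rep B') := hzmem
    obtain ⟨n, c, xs, hsum⟩ := Submodule.mem_span_set'.mp hzspan
    choose αf βf Cf hCf hαf hβf hcovf hxf using fun i => (xs i).2
    choose mf μf hμf hsubf using hcovf
    set N : ℕ := 1 + Finset.univ.sup (fun i : Fin n => optLen (αf i)) with hNdef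
    have hN1 : 1 ≤ N := Nat.le_add_right 1 _
    have hklt : ∀ i : Fin n, optLen (αf i) < N := by
      intro i
      have h2 : optLen (αf i) ≤ Finset.univ.sup (fun i : Fin n => optLen (αf i)) := by
        simpa using Finset.le_sup (f := fun j : Fin n => optLen (αf j))
          (Finset.mem_univ i)
      rw [hNdef]
      omega
    set z' : B := ∑ i : Fin n,
      if optLen (αf i) = optLen (βf i) then c i • (xs i : B) else 0 with hz'def
    have hPhiz : Phi rep ga z = z' := by
      rw [← hsum, Phi_sum, hz'def]
      apply Finset.sum_congr rfl
      intro i _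
      rw [Phi_smul, hxf i, Phi_elt rep ga (hCf i) (hαf i) (hβf i)]
      by_cases hi : optLen (αf i) = optLen (βf i)
      · rw [if_pos hi, if_pos hi]
      · rw [if_neg hi, if_neg hi, smul_zero]
    have hnorm' : ‖rep.p A - z'‖ < 1/2 := by
      calc ‖rep.p A - z'‖ = ‖Phi rep ga (rep.p A - z)‖ := by
            rw [Phi_sub, Phi_p rep ga hA, hPhiz]
        _ ≤ ‖rep.p A - z‖ := Phi_norm_le rep ga _
        _ < 1/2 := hznorm
    set T : Finset (List 𝒜) := (sa.setFinite A hA N hN1).toFinset with hTdef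
    set F : Finset (List 𝒜) := T.biUnion (fun β' => Finset.univ.biUnion
      (fun i : Fin n => Finset.univ.biUnion (fun l : Fin (mf i) =>
        {extO (μf i l) (List.drop (optLen (αf i)) β')}))) with hFdef
    have hdropne : ∀ β' ∈ T, ∀ i : Fin n, List.drop (optLen (αf i)) β' ≠ [] := by
      intro β' hβ' i
      have hβ'len : β'.length = N :=
        length_of_mem_labelsFromLen ((Set.Finite.mem_toFinset _).mp hβ')
      intro hcon
      have hlen := congrArg List.length hcon
      simp only [List.length_drop, List.length_nil] at hlen
      have := hklt i
      omega
    have hFne : ∀ w ∈ F, w ≠ [] := by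
      intro w hw
      obtain ⟨β', hβ', hw1⟩ := Finset.mem_biUnion.mp hw
      obtain ⟨i, -, hw2⟩ := Finset.mem_biUnion.mp hw1
      obtain ⟨l, -, hw3⟩ := Finset.mem_biUnion.mp hw2
      have hwof := Finset.mem_singleton.mp hw3
      rw [hwof]
      cases hμil : μf i l with
      | none => simpa [extO] using hdropne β' hβ' i
      | some u =>
        simp only [extO]
        intro hcon
        exact (hdropne β' hβ' i) (List.append_eq_nil_iff.mp hcon).2
    set U : Set V := ⋃ w ∈ F, relRng G L B' w with hUdef
    have key : ∀ β' ∈ T, relRng G L A β' ⊆ U := by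
      intro β' hβ'T
      have hβ'mem := (Set.Finite.mem_toFinset _).mp hβ'T
      have hβ'len : β'.length = N := length_of_mem_labelsFromLen hβ'mem
      have hβ'ne : β' ≠ [] := ne_nil_of_mem_labelsFromLen hN1 hβ'mem
      set Q : Set V := relRng G L A β' \ U with hQdef
      have hQbar : Bbar G L Q :=
        Bbar_diff_biUnion hL hB' F hFne (Bbar_relRng hL hA hβ'ne)
      suffices hQE : Q = ∅ by
        intro v hv
        by_contra hvU
        have hvQ : v ∈ Q := ⟨hv, hvU⟩
        rw [hQE] at hvQ
        exact hvQ
      by_contra hQne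
      have hQnonempty : Q.Nonempty := Set.nonempty_iff_ne_empty.mpr hQne
      apply hp Q hQbar hQnonempty
      have hE1 : rep.p Q * (star (sWord rep.s β') * rep.p A * sWord rep.s β') *
          rep.p Q = rep.p Q := by
        have h1 : star (sWord rep.s β') * rep.p A * sWord rep.s β'
            = rep.p (relRng G L A β') := by
          rw [mul_assoc, p_mul_sWord rep hL hA hβ'ne, ← mul_assoc,
            star_sWord_mul_self rep hL hβ'ne,
            rep.p_mul _ _ (Bbar_rngW hL hβ'ne) (Bbar_relRng hL hA hβ'ne),
            Set.inter_eq_self_of_subset_right (relRng_subset_rngW A β')]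
        rw [h1, rep.p_mul _ _ hQbar (Bbar_relRng hL hA hβ'ne),
          Set.inter_eq_left.mpr Set.diff_subset,
          rep.p_mul _ _ hQbar hQbar, Set.inter_self]
      have hE2 : ∀ i : Fin n, optLen (αf i) = optLen (βf i) →
          rep.p Q * (star (sWord rep.s β') * (xs i : B) * sWord rep.s β') *
            rep.p Q = 0 := by
        intro i hi
        rw [hxf i]
        apply compression_vanishes rep hL (hCf i) (hαf i) (hβf i) hi hβ'ne
          (by rw [hβ'len]; exact hklt i) hQbar
        have hsubU : relRng G L (Cf i) (List.drop (optLen (αf i)) β') ⊆ U := by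
          calc relRng G L (Cf i) (List.drop (optLen (αf i)) β')
              ⊆ relRng G L (⋃ l, relRngE G L B' (μf i l))
                  (List.drop (optLen (αf i)) β') := relRng_mono (hsubf i) _
            _ = ⋃ l, relRng G L (relRngE G L B' (μf i l))
                  (List.drop (optLen (αf i)) β') := relRng_iUnion _ _
            _ ⊆ U := by
                intro v hv
                obtain ⟨l, hl⟩ := Set.mem_iUnion.mp hv
                rw [relRng_relRngE B' (fun w hw => hμf i l w hw)
                  (hdropne β' hβ'T i)] at hl
                have hmemF : extO (μf i l) (List.drop (optLen (αf i)) β') ∈ F :=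
                  Finset.mem_biUnion.mpr ⟨β', hβ'T, Finset.mem_biUnion.mpr
                    ⟨i, Finset.mem_univ i, Finset.mem_biUnion.mpr
                      ⟨l, Finset.mem_univ l, Finset.mem_singleton_self _⟩⟩⟩
                exact Set.mem_iUnion₂.mpr ⟨_, hmemF, hl⟩
        apply Set.eq_empty_of_subset_empty
        rintro v ⟨⟨-, hvnotU⟩, hvrel⟩
        exact (hvnotU (hsubU hvrel)).elim
      have hzero' : rep.p Q * (star (sWord rep.s β') * z' * sWord rep.s β') *
          rep.p Q = 0 := by
        rw [hz'def, Finset.mul_sum, Finset.sum_mul, Finset.mul_sum, Finset.sum_mul]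
        apply Finset.sum_eq_zero
        intro i _
        by_cases hi : optLen (αf i) = optLen (βf i)
        · rw [if_pos hi, mul_smul_comm, smul_mul_assoc, mul_smul_comm,
            smul_mul_assoc, hE2 i hi, smul_zero]
        · simp only [if_neg hi, mul_zero, zero_mul]
      have hq_eq : rep.p Q = rep.p Q *
          (star (sWord rep.s β') * (rep.p A - z') * sWord rep.s β') * rep.p Q := by
        have h1 : star (sWord rep.s β') * (rep.p A - z') * sWord rep.s β'
            = star (sWord rep.s β') * rep.p A * sWord rep.s β'
              - star (sWord rep.s β') * z' * sWord rep.s β' := by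
          rw [mul_sub, sub_mul]
        rw [h1, mul_sub, sub_mul, hE1, hzero', sub_zero]
      have hqlt : ‖rep.p Q‖ < 1 := by
        calc ‖rep.p Q‖ = ‖rep.p Q *
            (star (sWord rep.s β') * (rep.p A - z') * sWord rep.s β') * rep.p Q‖ := by
              rw [← hq_eq]
          _ ≤ ‖rep.p A - z'‖ :=
              norm_qxq_le (norm_p_le_one rep hQbar) (norm_sWord_le_one rep hL hβ'ne)
          _ < 1 := lt_trans hnorm' (by norm_num)
      exact p_eq_zero_of_norm_lt_one rep hQbar hqlt
    set F' : Finset (List 𝒜) := F.filter (fun w => w ∈ labelsFromGe G L B' 1)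
      with hF'def
    refine ⟨N, hN1, F'.toList.length, fun i => some (F'.toList.get i), ?_, ?_⟩
    · intro i w hw
      have hi : F'.toList.get i = w := by injection hw
      rw [← hi]
      have hmem : F'.toList.get i ∈ F'.toList := List.get_mem _ i
      exact (Finset.mem_filter.mp (Finset.mem_toList.mp hmem)).2
    · intro v hv
      obtain ⟨β, hβmem, hvrel⟩ := Set.mem_iUnion₂.mp hv
      have hβT : β ∈ T := (Set.Finite.mem_toFinset _).mpr hβmem
      have hvU : v ∈ U := key β hβT hvrel
      obtain ⟨w, hwF, hvw⟩ := Set.mem_iUnion₂.mp hvU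
      have hwGe : w ∈ labelsFromGe G L B' 1 := by
        obtain ⟨pth, hlab, hsrc, -⟩ := hvw
        exact ⟨pth, hsrc, pth.length_pos, hlab⟩
      have hwF' : w ∈ F' := Finset.mem_filter.mpr ⟨hwF, hwGe⟩
      obtain ⟨i, hi⟩ := List.mem_iff_get.mp (Finset.mem_toList.mpr hwF')
      apply Set.mem_iUnion.mpr ⟨i, ?_⟩
      show v ∈ relRng G L B' (F'.toList.get i)
      rw [hi]
      exact hvw
  · -- Backward direction
    rintro ⟨N, hN1, n, μ, hμ, hcov⟩
    apply Set.mem_sInter.mpr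
    rintro I ⟨⟨hIclosed, hI0, hIadd, hIsmul, hImul⟩, hIq⟩
    have hwne : ∀ (i : Fin n) (w : List 𝒜), μ i = some w → w ≠ [] := by
      intro i w hμi
      obtain ⟨pth, -, -, hlab⟩ := hμ i w hμi
      rw [← hlab]
      exact pth.label_ne_nil
    have hBrel : ∀ i, Bbar G L (relRngE G L B' (μ i)) := by
      intro i
      cases hμi : μ i with
      | none => exact hB'
      | some w => exact Bbar_relRng hL hB' (hwne i w hμi)
    have hprel : ∀ i, rep.p (relRngE G L B' (μ i)) ∈ I := by
      intro i
      cases hμi : μ i with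
      | none => exact hIq
      | some w =>
        have hw := hwne i w hμi
        have heq : rep.p (relRng G L B' w)
            = star (sWord rep.s w) * (rep.p B' * sWord rep.s w) := by
          rw [p_mul_sWord rep hL hB' hw, ← mul_assoc,
            star_sWord_mul_self rep hL hw,
            rep.p_mul _ _ (Bbar_rngW hL hw) (Bbar_relRng hL hB' hw),
            Set.inter_eq_self_of_subset_right (relRng_subset_rngW B' w)]
        show rep.p (relRng G L B' w) ∈ I
        rw [heq]
        exact (hImul _ ((hImul _ hIq (sWord rep.s w)).1) (star (sWord rep.s w))).2
    rw [ckN rep hL sa hnosink hN1 hA]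
    apply Finset.sum_induction _ (· ∈ I) (fun a b ha hb => hIadd a ha b hb) hI0
    intro β hβ
    have hβmem := (Set.Finite.mem_toFinset _).mp hβ
    have hβne := ne_nil_of_mem_labelsFromLen hN1 hβmem
    have hsub : relRng G L A β ⊆ ⋃ i, relRngE G L B' (μ i) := by
      refine Set.Subset.trans ?_ hcov
      intro v hv
      exact Set.mem_iUnion₂.mpr ⟨β, hβmem, hv⟩
    have hpmem : rep.p (relRng G L A β) ∈ I :=
      p_mem_of_subset_iUnion rep hI0 hIadd hImul n _ hBrel hprel _
        (Bbar_relRng hL hA hβne) hsub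
    have h := (hImul _ ((hImul _ hpmem (star (sWord rep.s β))).1) (sWord rep.s β)).2
    rwa [← mul_assoc] at h

end
end

section
/- Let E be a countable directed graph with no sinks or sources and (E,L,𝔅̄) the associated labeled space. If (E,L,𝔅̄) has no repeatable paths, then it is disagreeable; that is, for every vertex v ∈ E^0, every l ≥ 1, and every N > 0, there exists a labeled path α ∈ L([v]_l E^{≥N}) that is not agreeable. -/
/-! # Common framework for labeled graph C*-algebras

Directed graphs, finite paths, labeled spaces `(E, L, 𝔅̄)` where `𝔅̄` is the
smallest accommodating set closed under relative complements (and containing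
the sink parts of its members), loops and generalized loops, representations
of labeled spaces in C*-algebras, gauge actions, infinite projections,
AF algebras, and closed two-sided ideals. -/

noncomputable section

variable {V E 𝒜 : Type*}

section AuxForDisagreeable

variable {V E 𝒜 : Type*}

lemma wordPow_succ (w : List 𝒜) (n : ℕ) : wordPow w (n + 1) = w ++ wordPow w n := by
  simp [wordPow, List.replicate_succ]

lemma wordPow_length (w : List 𝒜) (n : ℕ) : (wordPow w n).length = n * w.length := by
  induction n with
  | zero => simp [wordPow]
  | succ k ih => rw [wordPow_succ]; simp [ih]; ring

lemma wordPow_add (w : List 𝒜) (a b : ℕ) :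
    wordPow w (a + b) = wordPow w a ++ wordPow w b := by
  unfold wordPow
  rw [List.replicate_add, List.flatten_append]

lemma wordPow_prefix (w : List 𝒜) {a b : ℕ} (h : a ≤ b) :
    wordPow w a <+: wordPow w b := by
  obtain ⟨c, rfl⟩ := Nat.exists_eq_add_of_le h
  rw [wordPow_add]; exact List.prefix_append _ _

lemma isLabelWord_of_prefix {G : DirGraph V E} {L : E → 𝒜} {w u : List 𝒜}
    (hw : IsLabelWord G L w) (hu : u ≠ []) (hpre : u <+: w) : IsLabelWord G L u := by
  obtain ⟨p, hp⟩ := hw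
  have hlen : u.length ≤ p.edges.length := by
    have := hpre.length_le
    simpa [← hp, GPath.label] using this
  refine ⟨⟨p.edges.take u.length, ?_, p.chain.take _⟩, ?_⟩
  · rw [Ne, List.take_eq_nil_iff]
    push_neg
    exact ⟨by simpa using hu, p.ne⟩
  · have hu' : u = List.take u.length (p.label L) := List.prefix_iff_eq_take.1 (hp ▸ hpre)
    simp only [GPath.label, ← List.map_take] at hu' ⊢
    exact hu'.symm

end AuxForDisagreeable

/-- final Proposition of Section 4. Let `E` be a countable
directed graph with no sinks or sources. If the labeled space `(E, L, 𝔅̄)` has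
no repeatable paths, then it is disagreeable: for every vertex `v`, every
`l ≥ 1` and every `N > 0` there is a labeled path `α ∈ L([v]_l E^{≥N})` that
is not agreeable. -/
theorem no_repeatable_implies_disagreeable {V E 𝒜 : Type*}
    [Countable V] [Countable E] [Countable 𝒜]
    (G : DirGraph V E) (L : E → 𝒜) (hL : Function.Surjective L)
    (hnosink : G.sinks = ∅) (hnosource : ∀ v : V, ∃ e, G.rng e = v)
    (sa : StandingAssumptions G L)
    (hnorep : ¬ ∃ α : List 𝒜, IsLabelWord G L α ∧ Repeatable G L α) :
    ∀ (v : V) (l N : ℕ), 1 ≤ l → 0 < N →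
      ∃ α ∈ labelsFromGe G L (gvtx G L l v) N, ¬ AgreeableW G L l α := by
  intro v l N hl hN
  by_contra hcon
  push_neg at hcon
  -- every vertex emits an edge
  have hsrc : ∀ u : V, ∃ e, G.src e = u := by
    intro u
    by_contra h
    push_neg at h
    have : u ∈ G.sinks := fun e => h e
    rw [hnosink] at this
    exact this
  choose nxt hnxt using hsrc
  -- an infinite path starting at v
  set ed : ℕ → E := fun n => Nat.rec (nxt v) (fun _ prev => nxt (G.rng prev)) n with hed
  have hed0 : G.src (ed 0) = v := hnxt v
  have hedstep : ∀ n : ℕ, G.rng (ed n) = G.src (ed (n + 1)) := fun n => (hnxt _).symm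
  -- the finite subpaths
  have hchain : ∀ m : ℕ, List.Chain' (fun e f => G.rng e = G.src f)
      ((List.range (m + 1)).map ed) := by
    intro m
    rw [List.Chain', List.isChain_map]
    rw [List.isChain_range_succ]
    intro i _
    exact hedstep i
  have hne : ∀ m : ℕ, (List.range (m + 1)).map ed ≠ [] := by
    intro m
    exact List.ne_nil_of_length_pos (by simp)
  set Q : ℕ → GPath G := fun m => ⟨(List.range (m + 1)).map ed, hne m, hchain m⟩ with hQ
  have hQsrc : ∀ m : ℕ, (Q m).source = v := by
    intro m
    show G.src (((List.range (m + 1)).map ed).head (hne m)) = v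
    rw [List.head_map]
    have hr : ∀ (h : List.range (m + 1) ≠ []), (List.range (m + 1)).head h = 0 := by
      rw [List.range_succ_eq_map]
      intro h
      rfl
    rw [hr]
    exact hed0
  have hQlen : ∀ m : ℕ, (Q m).length = m + 1 := by
    intro m; show ((List.range (m + 1)).map ed).length = m + 1; simp
  -- the label words
  set W : ℕ → List 𝒜 := fun j => (List.range j).map (fun n => L (ed n)) with hW
  have hQlab : ∀ m : ℕ, (Q m).label L = W (m + 1) := by
    intro m
    show ((List.range (m + 1)).map ed).map L = _
    rw [List.map_map]
    rfl
  have hWlen : ∀ j : ℕ, (W j).length = j := by intro j; simp [hW]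
  have hWword : ∀ m : ℕ, IsLabelWord G L (W (m + 1)) := fun m => ⟨Q m, hQlab m⟩
  have hWpre : ∀ {i j : ℕ}, i ≤ j → W i <+: W j := by
    intro i j hij
    have : W i = List.take i (W j) := by
      simp only [hW, ← List.map_take, List.take_range, Nat.min_eq_left hij]
    rw [this]
    exact List.take_prefix _ _
  -- each long word from v is agreeable
  have hmem : ∀ m : ℕ, W (m + N + l + 1) ∈ labelsFromGe G L (gvtx G L l v) N := by
    intro m
    refine ⟨Q (m + N + l), ?_, ?_, hQlab _⟩
    · rw [hQsrc]
      exact ⟨hnosource v, rfl⟩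
    · rw [hQlen]; omega
  have hagree : ∀ m : ℕ, ∃ (k : ℕ) (β β' : List 𝒜), IsLabelWord G L β ∧
      IsLabelWord G L β' ∧ β.length ≤ l ∧ β' ≠ [] ∧ β' <+: β ∧
      W (m + N + l + 1) = wordPow β k ++ β' := fun m => hcon _ (hmem m)
  choose k β β' hβw hβ'w hβlen hβ'ne hβ'pre heq using hagree
  -- basic facts about the decomposition
  have hβne : ∀ m : ℕ, β m ≠ [] := by
    intro m h
    have := hβ'pre m
    rw [h, List.prefix_nil] at this
    exact hβ'ne m this
  have hβpos : ∀ m : ℕ, 1 ≤ (β m).length := by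
    intro m
    exact List.length_pos_iff.2 (hβne m)
  have hβ'len : ∀ m : ℕ, (β' m).length ≤ (β m).length := fun m => (hβ'pre m).length_le
  have hlenW : ∀ m : ℕ, m + N + l + 1 = k m * (β m).length + (β' m).length := by
    intro m
    have := congrArg List.length (heq m)
    simpa [hWlen, wordPow_length] using this
  have hkpos : ∀ m : ℕ, 1 ≤ k m := by
    intro m
    by_contra h
    have hk0 : k m = 0 := by omega
    have := hlenW m
    rw [hk0] at this
    have h1 := hβ'len m
    have h2 := hβlen m
    omega
  -- β m is a prefix of the infinite path, hence equals W (β m).length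
  have hβW : ∀ m : ℕ, β m = W (β m).length := by
    intro m
    have hpre : β m <+: W (m + N + l + 1) := by
      rw [heq m]
      obtain ⟨c, hc⟩ := Nat.exists_eq_add_of_le (hkpos m)
      rw [hc, wordPow_add]
      have h1 : wordPow (β m) 1 = β m := by simp [wordPow]
      rw [h1, List.append_assoc]
      exact List.prefix_append _ _
    have h1 : β m = List.take (β m).length (W (m + N + l + 1)) :=
      List.prefix_iff_eq_take.1 hpre
    have h2 : W (β m).length = List.take (β m).length (W (m + N + l + 1)) := by
      have hle : (β m).length ≤ m + N + l + 1 := by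
        have := hβlen m; omega
      simp only [hW, ← List.map_take, List.take_range, Nat.min_eq_left hle]
    rw [h2]
    exact h1
  -- pigeonhole: one fixed prefix length occurs infinitely often
  have hlpos : 0 < l := hl
  set jf : ℕ → Fin l := fun m => ⟨(β m).length - 1, by
    have h1 := hβpos m; have h2 := hβlen m; omega⟩ with hjf
  obtain ⟨j0, hj0⟩ := Finite.exists_infinite_fiber jf
  rw [Set.infinite_coe_iff] at hj0
  set j1 : ℕ := j0.val + 1 with hj1
  have hjval : ∀ m ∈ jf ⁻¹' {j0}, (β m).length = j1 := by
    intro m hm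
    have : jf m = j0 := hm
    have := congrArg Fin.val this
    simp only [hjf] at this
    have h1 := hβpos m
    omega
  obtain ⟨m0, hm0mem, _⟩ := hj0.exists_gt 0
  set β0 : List 𝒜 := W j1 with hβ0
  have hβ0eq : β0 = β m0 := by rw [hβW m0, hjval m0 hm0mem]
  have hβ0word : IsLabelWord G L β0 := hβ0eq ▸ hβw m0
  have hβ0len : β0.length = j1 := hWlen j1
  have hβ0ne : β0 ≠ [] := by
    intro h
    have := hβ0len
    rw [h] at this
    simp [hj1] at this
  -- β0 is repeatable
  have hrep : Repeatable G L β0 := by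
    intro n hn
    obtain ⟨m, hmmem, hmlt⟩ := hj0.exists_gt ((n + 1) * l)
    have hβm : β m = β0 := by rw [hβW m, hjval m hmmem, hβ0]
    have hklarge : n ≤ k m := by
      have hL1 := hlenW m
      rw [hβm, hβ0len] at hL1
      have h1 : (β' m).length ≤ l := by
        have := hβ'len m
        have := hβlen m
        omega
      have h2 : j1 ≤ l := by
        have := hβlen m
        rw [hβm, hβ0len] at this
        exact this
      -- k m * j1 = m + N + l + 1 - |β'| > (n+1)*l - l ≥ n*l ≥ n*j1
      by_contra hcontra
      push_neg at hcontra
      have : k m * j1 ≤ n * j1 := Nat.mul_le_mul_right _ (by omega)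
      have hnl : n * j1 ≤ n * l := Nat.mul_le_mul_left _ h2
      nlinarith
    have hpre2 : wordPow β0 n <+: W (m + N + l + 1) := by
      rw [heq m, hβm]
      exact (wordPow_prefix β0 hklarge).trans (List.prefix_append _ _)
    refine isLabelWord_of_prefix (hWword (m + N + l)) ?_ hpre2
    intro h
    have := congrArg List.length h
    rw [wordPow_length, hβ0len] at this
    simp [hj1] at this
    omega
  exact hnorep ⟨β0, hβ0word, hrep⟩

end
end
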